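/- arXiv:2305.04921 — 13 statements merged into one kernel-verified Lean document; each statement's English description precedes it below -/
import Mathlib

section
/- For every monotone function s : ℚ → ℚ and rationals x, y, the following are equivalent: s(x) ≠ y if and only if h_y ∘ s ∘ c_x ∈ {c_{y-1}, c_{y+1}}, where c_q denotes the constant function with value q and h_y is the monotone function sending arguments less than y to y-1, y to y, and arguments greater than y to y+1. -/
/-- For monotone `s : ℚ → ℚ` and rationals `x, y`:
`s x ≠ y` iff `h_y ∘ s ∘ c_x ∈ {c_{y-1}, c_{y+1}}`, where `c_q` is the constant
function with value `q` and `h_y` sends arguments below `y` to `y-1`, `y` to `y`,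
and arguments above `y` to `y+1`. -/
theorem ne_iff_comp_mem_constants (s : ℚ → ℚ) (hs : Monotone s) (x y : ℚ) :
    s x ≠ y ↔
      ((fun t : ℚ => if t < y then y - 1 else if t = y then y else y + 1) ∘ s ∘
          (fun _ : ℚ => x)) ∈
        ({(fun _ : ℚ => y - 1), (fun _ : ℚ => y + 1)} : Set (ℚ → ℚ)) := by
  simp only [Set.mem_insert_iff, Set.mem_singleton_iff, funext_iff, Function.comp_apply]
  constructor
  · intro h
    rcases lt_or_gt_of_ne h with hlt | hgt
    · exact Or.inl fun _ => by simp [hlt]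
    · exact Or.inr fun _ => by simp [not_lt.mpr hgt.le, hgt.ne']
  · rintro (h | h) heq
    · have := h 0
      simp [heq] at this; linarith
    · have := h 0
      simp [heq] at this
end

section
/- Let 𝒯 be a topology on the monoid M_ℚ of monotone functions ℚ → ℚ making composition separately continuous (in particular all left and right translations continuous) and satisfying the T1 separation axiom. Then the pointwise topology is coarser than 𝒯; i.e., every set of the form {f : M_ℚ | f(x) = y} for rationals x, y is 𝒯-open. -/
/-- The monoid of monotone functions on `ℚ`. -/
def MQ : Type := {f : ℚ → ℚ // Monotone f}

/-- Composition on `MQ`. -/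
def MQ.comp (f g : MQ) : MQ := ⟨f.1 ∘ g.1, f.2.comp g.2⟩

/-- If `𝒯` is a T1 topology on the monoid of monotone functions on `ℚ` for which all
left and right translations (by composition) are continuous, then the pointwise
topology is coarser than `𝒯`: each set `{f | f x = y}` is `𝒯`-open. -/
theorem pointwise_coarser_of_T1_translation_continuous (T : TopologicalSpace MQ)
    (hT1 : @T1Space MQ T)
    (hleft : ∀ t : MQ, @Continuous MQ MQ T T (fun s => MQ.comp t s))
    (hright : ∀ t : MQ, @Continuous MQ MQ T T (fun s => MQ.comp s t)) :
    ∀ x y : ℚ, @IsOpen MQ T {f : MQ | f.1 x = y} := by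
  intro x y
  -- constant functions
  set cx : MQ := ⟨fun _ => x, monotone_const⟩ with hcx
  set c1 : MQ := ⟨fun _ => y - 1, monotone_const⟩ with hc1
  set c2 : MQ := ⟨fun _ => y + 1, monotone_const⟩ with hc2
  -- the step function h_y
  have hmono : Monotone (fun t : ℚ => if t < y then y - 1 else if t = y then y else y + 1) := by
    intro a b hab
    dsimp only
    by_cases ha : a < y
    · by_cases hb : b < y
      · simp [ha, hb]
      · by_cases hb' : b = y <;> simp [ha, hb, hb'] <;> linarith
    · have hay : y ≤ a := not_lt.mp ha
      by_cases ha' : a = y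
      · subst ha'
        have hb : ¬ b < a := not_lt.mpr hab
        by_cases hb' : b = a <;> simp [ha, hb, hb'] <;> linarith
      · have hya : y < a := lt_of_le_of_ne hay (Ne.symm ha')
        have hyb : y < b := lt_of_lt_of_le hya hab
        simp [ha, ha', not_lt.mpr hyb.le, hyb.ne']
  set hy : MQ := ⟨fun t => if t < y then y - 1 else if t = y then y else y + 1, hmono⟩ with hhy
  have hΦ : @Continuous MQ MQ T T (fun s => MQ.comp hy (MQ.comp s cx)) :=
    (hleft hy).comp (hright cx)
  have hclosed : @IsClosed MQ T ({c1, c2} : Set MQ) := by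
    exact ((Set.finite_singleton c2).insert c1).isClosed
  have key : {f : MQ | f.1 x = y} = (fun s => MQ.comp hy (MQ.comp s cx)) ⁻¹' ({c1, c2}ᶜ) := by
    ext f
    simp only [Set.mem_setOf_eq, Set.mem_preimage, Set.mem_compl_iff, Set.mem_insert_iff,
      Set.mem_singleton_iff]
    have hval : (MQ.comp hy (MQ.comp f cx)).1 = fun _ : ℚ =>
        if f.1 x < y then y - 1 else if f.1 x = y then y else y + 1 := rfl
    constructor
    · intro hfx hc
      rcases hc with hc | hc
      · have := congrArg (fun g : MQ => g.1 0) hc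
        simp [hval, hfx] at this
        linarith
      · have := congrArg (fun g : MQ => g.1 0) hc
        simp [hval, hfx, hc2] at this
    · intro hc
      by_contra hne
      rcases lt_or_gt_of_ne hne with h | h
      · apply hc
        left
        apply Subtype.ext
        funext t
        simp [hval, h, hc1]
      · apply hc
        right
        apply Subtype.ext
        funext t
        simp [hval, not_lt_of_gt h, ne_of_gt h, hc2]
  rw [key]
  exact hΦ.isOpen_preimage _ hclosed.isOpen_compl
end

section
/- Let s : ℚ → ℚ be a strictly monotone (injective monotone) function such that every limit point of its image (as a subset of ℝ) is irrational. Then for every rational q, sup s((-∞,q)∩ℚ) < s(q) < inf s((q,+∞)∩ℚ); in particular every rational is a discontinuity point of s. -/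
/-- If `s : ℚ → ℚ` is monotone and injective and every limit point (in `ℝ`) of its
image is irrational, then for every rational `q`,
`sup s((-∞,q)∩ℚ) < s q < inf s((q,+∞)∩ℚ)`; in particular every rational is a
discontinuity point of `s`. -/
theorem strictMono_jumps_at_rationals (s : ℚ → ℚ) (hmono : Monotone s)
    (hinj : Function.Injective s)
    (hLP : ∀ γ : ℝ, γ ∈ closure ((Set.range fun q : ℚ => (s q : ℝ)) \ {γ}) →
      Irrational γ) :
    ∀ q : ℚ,
      sSup ((fun p : ℚ => ((s p : ℝ) : EReal)) '' {p : ℚ | p < q}) <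
          ((s q : ℝ) : EReal) ∧
      ((s q : ℝ) : EReal) <
          sInf ((fun p : ℚ => ((s p : ℝ) : EReal)) '' {p : ℚ | q < p}) := by
  have hsm : StrictMono s := hmono.strictMono_of_injective hinj
  intro q
  have hnotirr : ¬ Irrational ((s q : ℚ) : ℝ) := Rat.not_irrational _
  constructor
  · by_contra hle
    push_neg at hle
    have hub : sSup ((fun p : ℚ => ((s p : ℝ) : EReal)) '' {p : ℚ | p < q}) ≤
        ((s q : ℝ) : EReal) := by
      apply sSup_le
      rintro x ⟨p, hp, rfl⟩
      show ((s p : ℝ) : EReal) ≤ ((s q : ℝ) : EReal)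
      exact_mod_cast (hsm hp).le
    have heq : sSup ((fun p : ℚ => ((s p : ℝ) : EReal)) '' {p : ℚ | p < q}) =
        ((s q : ℝ) : EReal) := le_antisymm hub hle
    apply hnotirr
    apply hLP
    rw [Metric.mem_closure_iff]
    intro ε hε
    have hb : (((s q : ℝ) - ε : ℝ) : EReal) <
        sSup ((fun p : ℚ => ((s p : ℝ) : EReal)) '' {p : ℚ | p < q}) := by
      rw [heq]
      exact_mod_cast sub_lt_self _ hε
    obtain ⟨x, ⟨p, hp, rfl⟩, hx⟩ := lt_sSup_iff.mp hb
    have hx' : ((s q : ℝ) - ε : ℝ) < (s p : ℝ) := by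
      beta_reduce at hx; exact_mod_cast hx
    have hlt : (s p : ℝ) < (s q : ℝ) := by exact_mod_cast hsm hp
    refine ⟨(s p : ℝ), ⟨⟨p, rfl⟩, ?_⟩, ?_⟩
    · simp only [Set.mem_singleton_iff]
      exact ne_of_lt hlt
    · rw [Real.dist_eq, abs_sub_lt_iff]
      constructor <;> linarith
  · by_contra hle
    push_neg at hle
    have hlb : ((s q : ℝ) : EReal) ≤
        sInf ((fun p : ℚ => ((s p : ℝ) : EReal)) '' {p : ℚ | q < p}) := by
      apply le_sInf
      rintro x ⟨p, hp, rfl⟩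
      show ((s q : ℝ) : EReal) ≤ ((s p : ℝ) : EReal)
      exact_mod_cast (hsm hp).le
    have heq : sInf ((fun p : ℚ => ((s p : ℝ) : EReal)) '' {p : ℚ | q < p}) =
        ((s q : ℝ) : EReal) := le_antisymm hle hlb
    apply hnotirr
    apply hLP
    rw [Metric.mem_closure_iff]
    intro ε hε
    have hb : sInf ((fun p : ℚ => ((s p : ℝ) : EReal)) '' {p : ℚ | q < p}) <
        (((s q : ℝ) + ε : ℝ) : EReal) := by
      rw [heq]
      exact_mod_cast lt_add_of_pos_right _ hε
    obtain ⟨x, ⟨p, hp, rfl⟩, hx⟩ := sInf_lt_iff.mp hb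
    have hx' : (s p : ℝ) < ((s q : ℝ) + ε : ℝ) := by
      beta_reduce at hx; exact_mod_cast hx
    have hlt : (s q : ℝ) < (s p : ℝ) := by exact_mod_cast hsm hp
    refine ⟨(s p : ℝ), ⟨⟨p, rfl⟩, ?_⟩, ?_⟩
    · simp only [Set.mem_singleton_iff]
      exact (ne_of_lt hlt).symm
    · rw [Real.dist_eq, abs_sub_lt_iff]
      constructor <;> linarith
end

section
/- For every subset A ⊆ ℚ there exists a monotone function f : ℚ → ℚ with image exactly A such that for every w ∈ A, the preimage f⁻¹({w}) is an open interval of ℚ with irrational endpoints (i.e., of the form (r,t) ∩ ℚ with r, t ∈ (ℝ∖ℚ) ∪ {±∞}). In particular, there exists a surjective monotone function on ℚ all of whose point-preimages are intervals with irrational endpoints. -/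
open Set

section Aux

variable {A : Set ℚ}

/-- The lexicographic product `A ×ₗ ℚ` is densely ordered (only density of `ℚ` is needed). -/
lemma lexDense (A : Set ℚ) : DenselyOrdered (↥A ×ₗ ℚ) where
  dense := by
    rintro ⟨a, x⟩ ⟨b, y⟩ h
    rcases Prod.Lex.lt_iff.mp h with hab | ⟨hab, hxy⟩
    · exact ⟨toLex (a, x + 1), Prod.Lex.lt_iff.mpr (Or.inr ⟨rfl, lt_add_one x⟩),
        Prod.Lex.lt_iff.mpr (Or.inl hab)⟩
    · obtain ⟨c, h1, h2⟩ := exists_between hxy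
      exact ⟨toLex (a, c), Prod.Lex.lt_iff.mpr (Or.inr ⟨rfl, h1⟩),
        Prod.Lex.lt_iff.mpr (Or.inr ⟨hab, h2⟩)⟩

end Aux

/-- For every nonempty `A ⊆ ℚ` there is a monotone `f : ℚ → ℚ` with image exactly
`A` whose point-preimages are intervals of `ℚ` with irrational (or infinite)
endpoints. -/
theorem exists_monotone_range_with_irrational_fibres (A : Set ℚ) (hA : A.Nonempty) :
    ∃ f : ℚ → ℚ, Monotone f ∧ Set.range f = A ∧
      ∀ w ∈ A, ∃ r t : EReal,
        (r = ⊥ ∨ ∃ ρ : ℝ, Irrational ρ ∧ r = (ρ : EReal)) ∧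
        (t = ⊤ ∨ ∃ τ : ℝ, Irrational τ ∧ t = (τ : EReal)) ∧
        (∀ q : ℚ, f q = w ↔ (r < ((q : ℝ) : EReal) ∧ ((q : ℝ) : EReal) < t)) := by
  classical
  haveI : Nonempty ↥A := hA.to_subtype
  haveI : Countable (↥A ×ₗ ℚ) := Countable.of_equiv (↥A × ℚ) toLex
  haveI := lexDense A
  haveI : Nonempty (↥A ×ₗ ℚ) := ⟨toLex (Classical.arbitrary ↥A, 0)⟩
  obtain ⟨e⟩ : Nonempty (ℚ ≃o (↥A ×ₗ ℚ)) := Order.iso_of_countable_dense ℚ (↥A ×ₗ ℚ)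
  set f : ℚ → ℚ := fun q => ((ofLex (e q)).1 : ℚ) with hf
  -- monotonicity
  have hmono : Monotone f := by
    intro a b hab
    have h : e a ≤ e b := e.monotone hab
    rcases Prod.Lex.le_iff.mp h with h1 | ⟨h1, _⟩
    · exact le_of_lt h1
    · exact le_of_eq (congrArg (fun s : ↥A => (s : ℚ)) h1)
  -- range
  have hrange : Set.range f = A := by
    apply Set.eq_of_subset_of_subset
    · rintro _ ⟨q, rfl⟩; exact ((ofLex (e q)).1).2
    · intro w hw
      refine ⟨e.symm (toLex (⟨w, hw⟩, 0)), ?_⟩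
      simp [hf]
  -- each point has strictly smaller / larger elements in its own fibre
  have hstrict : ∀ p : ℚ, (∃ y, f y = f p ∧ y < p) ∧ (∃ y, f y = f p ∧ p < y) := by
    intro p
    set a := (ofLex (e p)).1
    set x := (ofLex (e p)).2
    have hep : e p = toLex (a, x) := rfl
    constructor
    · refine ⟨e.symm (toLex (a, x - 1)), ?_, ?_⟩
      · simp [hf]; rfl
      · rw [← e.lt_iff_lt]
        simp only [OrderIso.apply_symm_apply, hep]
        exact Prod.Lex.lt_iff.mpr (Or.inr ⟨rfl, sub_one_lt x⟩)
    · refine ⟨e.symm (toLex (a, x + 1)), ?_, ?_⟩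
      · simp [hf]; rfl
      · rw [← e.lt_iff_lt]
        simp only [OrderIso.apply_symm_apply, hep]
        exact Prod.Lex.lt_iff.mpr (Or.inr ⟨rfl, lt_add_one x⟩)
  refine ⟨f, hmono, hrange, ?_⟩
  intro w hw
  set F : Set ℚ := {q | f q = w} with hFdef
  have hFne : F.Nonempty := by
    have : w ∈ Set.range f := hrange ▸ hw
    obtain ⟨q, hq⟩ := this
    exact ⟨q, hq⟩
  set S : Set ℝ := (fun q : ℚ => (q : ℝ)) '' F with hSdef
  have hSne : S.Nonempty := hFne.image _
  -- convexity of the fibre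
  have hconv : ∀ x ∈ F, ∀ y ∈ F, ∀ q : ℚ, x ≤ q → q ≤ y → q ∈ F := by
    intro x hx y hy q hxq hqy
    have h1 : w ≤ f q := hx ▸ hmono hxq
    have h2 : f q ≤ w := hy ▸ hmono hqy
    exact le_antisymm h2 h1
  -- elements of other fibres are on one side
  have hside : ∀ p : ℚ, f p ≠ w → (∀ x ∈ F, x < p) ∨ (∀ x ∈ F, p < x) := by
    intro p hp
    rcases lt_or_gt_of_ne hp with h | h
    · right; intro x hx
      by_contra hc
      push_neg at hc
      exact absurd (hx ▸ hmono hc : w ≤ f p) (not_le.mpr h)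
    · left; intro x hx
      by_contra hc
      push_neg at hc
      exact absurd (hx ▸ hmono hc : f p ≤ w) (not_le.mpr h)
  -- irrationality of a finite supremum
  have hirr_sup : BddAbove S → Irrational (sSup S) := by
    intro hb
    rw [Irrational]
    intro hmem
    obtain ⟨p, hp⟩ := hmem
    by_cases hpF : p ∈ F
    · obtain ⟨y, hy, hpy⟩ := (hstrict p).2
      have hyF : y ∈ F := by rwa [hpF] at hy  -- f y = f p = w
      have : (y : ℝ) ≤ sSup S := le_csSup hb ⟨y, hyF, rfl⟩
      rw [← hp] at this
      exact absurd (by exact_mod_cast this) (not_le.mpr hpy)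
    · have hpw : f p ≠ w := hpF
      have hub : ∀ x ∈ F, x < p := by
        rcases hside p hpw with h | h
        · exact h
        · exfalso
          obtain ⟨x, hx⟩ := hFne
          have h1 : (x : ℝ) ≤ sSup S := le_csSup hb ⟨x, hx, rfl⟩
          rw [← hp] at h1
          exact absurd (h x hx) (not_lt.mpr (by exact_mod_cast h1))
      obtain ⟨y, hy, hyp⟩ := (hstrict p).1
      -- every element of F is < y
      have hyub : ∀ x ∈ F, x < y := by
        intro x hx
        by_contra hc
        push_neg at hc
        have hx' : f x = w := hx
        have h1 : f y ≤ f x := hmono hc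
        rw [hx', hy] at h1
        have h2 : f x ≤ f p := hmono (le_of_lt (hub x hx))
        rw [hx'] at h2
        exact hpw (le_antisymm h1 h2)
      have : sSup S ≤ (y : ℝ) := by
        apply csSup_le hSne
        rintro _ ⟨x, hx, rfl⟩
        show ((x : ℚ) : ℝ) ≤ (y : ℝ)
        exact_mod_cast le_of_lt (hyub x hx)
      rw [← hp] at this
      have : (p : ℝ) ≤ (y : ℝ) := this
      exact absurd hyp (not_lt.mpr (by exact_mod_cast this))
  have hirr_inf : BddBelow S → Irrational (sInf S) := by
    intro hb
    rw [Irrational]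
    intro hmem
    obtain ⟨p, hp⟩ := hmem
    by_cases hpF : p ∈ F
    · obtain ⟨y, hy, hpy⟩ := (hstrict p).1
      have hyF : y ∈ F := by rwa [hpF] at hy
      have : sInf S ≤ (y : ℝ) := csInf_le hb ⟨y, hyF, rfl⟩
      rw [← hp] at this
      exact absurd (by exact_mod_cast this : p ≤ y) (not_le.mpr hpy)
    · have hpw : f p ≠ w := hpF
      have hlb : ∀ x ∈ F, p < x := by
        rcases hside p hpw with h | h
        · exfalso
          obtain ⟨x, hx⟩ := hFne
          have h1 : sInf S ≤ (x : ℝ) := csInf_le hb ⟨x, hx, rfl⟩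
          rw [← hp] at h1
          exact absurd (h x hx) (not_lt.mpr (by exact_mod_cast h1))
        · exact h
      obtain ⟨y, hy, hyp⟩ := (hstrict p).2
      have hylb : ∀ x ∈ F, y < x := by
        intro x hx
        by_contra hc
        push_neg at hc
        have h1 : w ≤ f y := hx ▸ hmono hc
        rw [hy] at h1
        have h2 : f p ≤ w := hx ▸ hmono (le_of_lt (hlb x hx))
        exact hpw (le_antisymm h2 h1)
      have : (y : ℝ) ≤ sInf S := by
        apply le_csInf hSne
        rintro _ ⟨x, hx, rfl⟩
        show ((y : ℚ) : ℝ) ≤ (x : ℝ)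
        exact_mod_cast le_of_lt (hylb x hx)
      rw [← hp] at this
      exact absurd hyp (not_lt.mpr (by exact_mod_cast this))
  -- define the endpoints
  set r : EReal := if BddBelow S then ((sInf S : ℝ) : EReal) else ⊥ with hr
  set t : EReal := if BddAbove S then ((sSup S : ℝ) : EReal) else ⊤ with ht
  refine ⟨r, t, ?_, ?_, ?_⟩
  · by_cases hb : BddBelow S
    · exact Or.inr ⟨sInf S, hirr_inf hb, by rw [hr, if_pos hb]⟩
    · exact Or.inl (by rw [hr, if_neg hb])
  · by_cases hb : BddAbove S
    · exact Or.inr ⟨sSup S, hirr_sup hb, by rw [ht, if_pos hb]⟩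
    · exact Or.inl (by rw [ht, if_neg hb])
  · intro q
    constructor
    · intro hq
      have hqF : q ∈ F := hq
      constructor
      · by_cases hb : BddBelow S
        · rw [hr, if_pos hb]
          rw [EReal.coe_lt_coe_iff]
          have h1 : sInf S ≤ (q : ℝ) := csInf_le hb ⟨q, hqF, rfl⟩
          refine lt_of_le_of_ne h1 ?_
          intro hc
          exact (hirr_inf hb) ⟨q, hc.symm⟩
        · rw [hr, if_neg hb]; exact EReal.bot_lt_coe _
      · by_cases hb : BddAbove S
        · rw [ht, if_pos hb]
          rw [EReal.coe_lt_coe_iff]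
          have h1 : (q : ℝ) ≤ sSup S := le_csSup hb ⟨q, hqF, rfl⟩
          refine lt_of_le_of_ne h1 ?_
          intro hc
          exact (hirr_sup hb) ⟨q, hc⟩
        · rw [ht, if_neg hb]; exact EReal.coe_lt_top _
    · rintro ⟨h1, h2⟩
      -- find x ∈ F with x < q
      have hex_lo : ∃ x ∈ F, x ≤ q := by
        by_cases hb : BddBelow S
        · rw [hr, if_pos hb, EReal.coe_lt_coe_iff] at h1
          by_contra hc
          push_neg at hc
          have : (q : ℝ) ≤ sInf S := by
            apply le_csInf hSne
            rintro _ ⟨x, hx, rfl⟩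
            show ((q : ℚ) : ℝ) ≤ (x : ℝ)
            exact_mod_cast le_of_lt (hc x hx)
          exact absurd h1 (not_lt.mpr this)
        · by_contra hc
          push_neg at hc
          apply hb
          refine ⟨(q : ℝ), ?_⟩
          rintro _ ⟨x, hx, rfl⟩
          show ((q : ℚ) : ℝ) ≤ (x : ℝ)
          exact_mod_cast le_of_lt (hc x hx)
      have hex_hi : ∃ y ∈ F, q ≤ y := by
        by_cases hb : BddAbove S
        · rw [ht, if_pos hb, EReal.coe_lt_coe_iff] at h2
          by_contra hc
          push_neg at hc
          have : sSup S ≤ (q : ℝ) := by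
            apply csSup_le hSne
            rintro _ ⟨x, hx, rfl⟩
            show ((x : ℚ) : ℝ) ≤ (q : ℝ)
            exact_mod_cast le_of_lt (hc x hx)
          exact absurd h2 (not_lt.mpr this)
        · by_contra hc
          push_neg at hc
          apply hb
          refine ⟨(q : ℝ), ?_⟩
          rintro _ ⟨x, hx, rfl⟩
          show ((x : ℚ) : ℝ) ≤ (q : ℝ)
          exact_mod_cast le_of_lt (hc x hx)
      obtain ⟨x, hx, hxq⟩ := hex_lo
      obtain ⟨y, hy, hqy⟩ := hex_hi
      exact hconv x hx y hy q hxq hqy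
end

section
/- There exists an injective monotone function g : ℚ → ℚ whose image is unbounded below and above, which has no irrational discontinuity points (for every irrational γ, sup g((-∞,γ)∩ℚ) = inf g((γ,+∞)∩ℚ)), and all of whose image's limit points in ℝ are irrational. -/
namespace GenericInj

/-- rapidly decreasing weights: `w i = 2 ^ (-2^(i+2))`. -/
def w (i : ℕ) : ℚ := ((2:ℚ) ^ (2^(i+2) : ℕ))⁻¹

lemma w_pos (i : ℕ) : 0 < w i := by
  unfold w; positivity

lemma w_succ (i : ℕ) : w (i+1) = w i * w i := by
  unfold w
  rw [← mul_inv]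
  rw [← pow_add]
  congr 1
  rw [show i+1+2 = (i+2)+1 from rfl, pow_succ, mul_two]

lemma w_le (i : ℕ) : w i ≤ 1/16 := by
  unfold w
  rw [show (1:ℚ)/16 = ((2:ℚ)^(4:ℕ))⁻¹ by norm_num]
  apply inv_anti₀ (by positivity)
  apply pow_le_pow_right₀ (by norm_num)
  have : 4 = 2^2 := rfl
  calc (4:ℕ) = 2^2 := rfl
    _ ≤ 2^(i+2) := Nat.pow_le_pow_right (by norm_num) (by omega)

lemma w_succ_le (i : ℕ) : w (i+1) ≤ w i / 16 := by
  have h := w_le i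
  have hp := w_pos i
  rw [w_succ]
  nlinarith

lemma w_anti {i j : ℕ} (h : i ≤ j) : w j ≤ w i := by
  induction j with
  | zero => simp_all
  | succ k ih =>
    rcases Nat.lt_or_ge i (k+1) with h'|h'
    · have := ih (by omega)
      have := w_succ_le k
      have := w_pos k
      linarith
    · have : i = k+1 := by omega
      subst this; rfl

lemma w_lt_one (i : ℕ) : w i < 1 := lt_of_le_of_lt (w_le i) (by norm_num)

lemma w_zero : w 0 = 1/16 := by norm_num [w]

lemma sum_w_le_aux (k : ℕ) : ∀ n : ℕ, (∑ i ∈ Finset.Ico n (n+k), w i) ≤ (16/15) * w n := by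
  induction k with
  | zero => intro n; simpa using le_of_lt (by have := w_pos n; linarith : (0:ℚ) < (16/15) * w n)
  | succ k ih =>
    intro n
    rw [Finset.sum_eq_sum_Ico_succ_bot (by omega)]
    have h1 : n + (k+1) = (n+1) + k := by omega
    rw [h1]
    have h2 := ih (n+1)
    have h3 := w_succ_le n
    have h4 := w_pos n
    linarith

lemma sum_w_le (a b : ℕ) : (∑ i ∈ Finset.Ico a b, w i) ≤ (16/15) * w a := by
  rcases le_total a b with h|h
  · have : b = a + (b - a) := by omega
    rw [this]; exact sum_w_le_aux _ a
  · rw [Finset.Ico_eq_empty (by omega)]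
    have := w_pos a
    simp
    linarith

end GenericInj
namespace GenericInj

def dg (c : ℕ → Bool) (i : ℕ) : ℚ := if c i then 2 else 1

lemma dg_one_le (c i) : 1 ≤ dg c i := by unfold dg; split <;> norm_num
lemma dg_le_two (c i) : dg c i ≤ 2 := by unfold dg; split <;> norm_num
lemma dg_nonneg (c i) : 0 ≤ dg c i := le_trans (by norm_num) (dg_one_le c i)
lemma dg_true {c : ℕ → Bool} {i} (h : c i = true) : dg c i = 2 := by simp [dg, h]
lemma dg_false {c : ℕ → Bool} {i} (h : c i = false) : dg c i = 1 := by simp [dg, h]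

def head (m : ℤ) (n : ℕ) (c : ℕ → Bool) : ℚ := m + ∑ i ∈ Finset.range n, dg c i * w i
def val (m : ℤ) (n : ℕ) (c : ℕ → Bool) : ℚ := head m n c + (3/2) * w n
def uval (m : ℤ) : ℚ := m + 1/2

def S : Set ℚ := {q | (∃ m, q = uval m) ∨ ∃ m n c, q = val m n c}

lemma uval_mem (m : ℤ) : uval m ∈ S := Or.inl ⟨m, rfl⟩
lemma val_mem (m n c) : val m n c ∈ S := Or.inr ⟨m, n, c, rfl⟩

/-- the "tail" of a value relative to a truncation level. -/
def R (c : ℕ → Bool) (n n' : ℕ) : ℚ := (∑ i ∈ Finset.Ico n n', dg c i * w i) + (3/2) * w n'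

lemma decomp (m : ℤ) (c : ℕ → Bool) {n n' : ℕ} (h : n ≤ n') :
    val m n' c = head m n c + R c n n' := by
  unfold val head R
  rw [Finset.range_eq_Ico, Finset.range_eq_Ico, ← Finset.sum_Ico_consecutive (fun i => dg c i * w i) (Nat.zero_le n) h]
  ring

lemma R_self (c n) : R c n n = (3/2) * w n := by simp [R]

lemma R_pos (c n n') : 0 < R c n n' := by
  have h1 : 0 ≤ ∑ i ∈ Finset.Ico n n', dg c i * w i :=
    Finset.sum_nonneg fun i _ => mul_nonneg (dg_nonneg c i) (w_pos i).le
  have := w_pos n'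
  unfold R; linarith

lemma R_ub {n n' : ℕ} (c) (h : n ≤ n') : R c n n' ≤ (5/2) * w n := by
  rcases eq_or_lt_of_le h with rfl|hlt
  · rw [R_self]; have := w_pos n; linarith
  · have h1 : (∑ i ∈ Finset.Ico n n', dg c i * w i) ≤ ∑ i ∈ Finset.Ico n n', 2 * w i :=
      Finset.sum_le_sum fun i _ => mul_le_mul_of_nonneg_right (dg_le_two c i) (w_pos i).le
    have h2 : (∑ i ∈ Finset.Ico n n', 2 * w i) = 2 * ∑ i ∈ Finset.Ico n n', w i := by
      rw [Finset.mul_sum]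
    have h3 := sum_w_le n n'
    have h4 : w n' ≤ w (n+1) := w_anti (by omega)
    have h5 := w_succ_le n
    have h6 := w_pos n
    unfold R; nlinarith

lemma R_lb {n n' : ℕ} (c) (h : n < n') : w n ≤ R c n n' := by
  have h1 : dg c n * w n ≤ ∑ i ∈ Finset.Ico n n', dg c i * w i :=
    Finset.single_le_sum (f := fun i => dg c i * w i)
      (fun i _ => mul_nonneg (dg_nonneg c i) (w_pos i).le) (Finset.mem_Ico.mpr ⟨le_refl n, h⟩)
  have h2 : w n ≤ dg c n * w n := by
    have := dg_one_le c n; have := w_pos n; nlinarith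
  have := w_pos n'
  unfold R; linarith

lemma R_split {n n' : ℕ} (c) (h : n < n') : R c n n' = dg c n * w n + R c (n+1) n' := by
  unfold R
  rw [Finset.sum_eq_sum_Ico_succ_bot h]
  ring

lemma R_tail_ub {n n' : ℕ} (c) (h : n < n') : R c (n+1) n' ≤ (1/4) * w n := by
  have h1 := R_ub c (show n+1 ≤ n' by omega)
  have h2 := w_succ_le n
  have := w_pos n
  linarith

lemma val_gt (m : ℤ) (n : ℕ) (c : ℕ → Bool) : (m:ℚ) < val m n c := by
  have h := decomp m c (Nat.zero_le n)
  have : head m 0 c = m := by simp [head]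
  rw [h, this]
  have := R_pos c 0 n
  linarith

lemma val_lt (m : ℤ) (n : ℕ) (c : ℕ → Bool) : val m n c < (m:ℚ) + 1/4 := by
  have h := decomp m c (Nat.zero_le n)
  have h0 : head m 0 c = m := by simp [head]
  have h1 := R_ub c (Nat.zero_le n)
  rw [w_zero] at h1
  rw [h, h0]
  linarith

lemma head_congr {c c' : ℕ → Bool} (m : ℤ) (n : ℕ) (h : ∀ i < n, c i = c' i) :
    head m n c = head m n c' := by
  unfold head
  congr 1
  apply Finset.sum_congr rfl
  intro i hi
  rw [show dg c i = dg c' i by unfold dg; rw [h i (Finset.mem_range.mp hi)]]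

lemma val_congr {c c' : ℕ → Bool} (m : ℤ) (n : ℕ) (h : ∀ i < n, c i = c' i) :
    val m n c = val m n c' := by
  unfold val; rw [head_congr m n h]

lemma ext_true (m : ℤ) {c : ℕ → Bool} {n n' : ℕ} (h : n < n') (hc : c n = true) :
    (1/2) * w n < val m n' c - val m n c ∧ val m n' c - val m n c ≤ (3/4) * w n := by
  have h1 := decomp m c h.le
  have h2 : val m n c = head m n c + (3/2) * w n := rfl
  have h3 := R_split c h
  have h4 := R_tail_ub c h
  have h5 := R_pos c (n+1) n'
  rw [dg_true hc] at h3
  constructor <;> (rw [h1, h2, h3]; ring_nf; ring_nf at h4 h5 ⊢; linarith)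

lemma ext_false (m : ℤ) {c : ℕ → Bool} {n n' : ℕ} (h : n < n') (hc : c n = false) :
    -((1/2) * w n) < val m n' c - val m n c ∧ val m n' c - val m n c ≤ -((1/4) * w n) := by
  have h1 := decomp m c h.le
  have h2 : val m n c = head m n c + (3/2) * w n := rfl
  have h3 := R_split c h
  have h4 := R_tail_ub c h
  have h5 := R_pos c (n+1) n'
  rw [dg_false hc] at h3
  constructor <;> (rw [h1, h2, h3]; ring_nf; ring_nf at h4 h5; linarith)

lemma ext_abs (m : ℤ) {c : ℕ → Bool} {n n' : ℕ} (h : n < n') :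
    (1/4) * w n ≤ |val m n' c - val m n c| := by
  rcases Bool.eq_false_or_eq_true (c n) with hc|hc
  · have := (ext_true m h hc).1
    have := w_pos n
    rw [abs_of_pos (by linarith)]
    linarith
  · have := (ext_false m h hc).2
    have := w_pos n
    rw [abs_sub_comm, abs_of_pos (by linarith)]
    linarith

lemma diff_digit (m : ℤ) {c c' : ℕ → Bool} {j n n' : ℕ} (hj : j < n) (hj' : j < n')
    (hagree : ∀ i < j, c i = c' i) (h1 : c j = false) (h2 : c' j = true) :
    (3/4) * w j ≤ val m n' c' - val m n c ∧ val m n' c' - val m n c < (5/4) * w j := by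
  have d1 := decomp m c hj.le
  have d2 := decomp m c' hj'.le
  have hh : head m j c = head m j c' := head_congr m j hagree
  have s1 := R_split c hj
  have s2 := R_split c' hj'
  rw [dg_false h1] at s1
  rw [dg_true h2] at s2
  have t1 := R_tail_ub c hj
  have t2 := R_tail_ub c' hj'
  have p1 := R_pos c (j+1) n
  have p2 := R_pos c' (j+1) n'
  have := w_pos j
  constructor <;> (rw [d1, d2, ← hh, s1, s2]; linarith)

end GenericInj
namespace GenericInj

lemma u_val_gap (m' m : ℤ) (n : ℕ) (c : ℕ → Bool) : 1/4 ≤ |uval m' - val m n c| := by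
  have h1 := val_gt m n c
  have h2 := val_lt m n c
  have h3 : (m':ℤ) ≤ m - 1 ∨ m' = m ∨ m + 1 ≤ m' := by omega
  unfold uval
  rcases h3 with h|h|h
  · have : (m':ℚ) ≤ (m:ℚ) - 1 := by exact_mod_cast h
    rw [abs_sub_comm, abs_of_pos (by linarith)]; linarith
  · subst h
    rw [abs_of_pos (by linarith)]; linarith
  · have : (m:ℚ) + 1 ≤ (m':ℚ) := by exact_mod_cast h
    rw [abs_of_pos (by linarith)]; linarith

lemma u_u_gap {m m' : ℤ} (h : m ≠ m') : 1 ≤ |uval m - uval m'| := by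
  unfold uval
  have : (1:ℚ) ≤ |(m:ℚ) - (m':ℚ)| := by
    have : (m:ℚ) - m' = ((m - m' : ℤ) : ℚ) := by push_cast; ring
    rw [this, ← Int.cast_abs]
    exact_mod_cast Int.one_le_abs (by omega)
  calc (1:ℚ) ≤ |(m:ℚ) - (m':ℚ)| := this
    _ = |((m:ℚ) + 1/2) - ((m':ℚ) + 1/2)| := by ring_nf
    _ = _ := rfl

lemma m_gap {m m' : ℤ} {n n' : ℕ} {c c' : ℕ → Bool} (h : m ≠ m') :
    3/4 ≤ |val m' n' c' - val m n c| := by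
  have h1 := val_gt m n c
  have h2 := val_lt m n c
  have h3 := val_gt m' n' c'
  have h4 := val_lt m' n' c'
  rcases lt_or_gt_of_ne h with h|h
  · have : (m:ℚ) + 1 ≤ (m':ℚ) := by exact_mod_cast h
    rw [abs_of_pos (by linarith)]; linarith
  · have : (m':ℚ) + 1 ≤ (m:ℚ) := by exact_mod_cast h
    rw [abs_sub_comm, abs_of_pos (by linarith)]; linarith

/-- The separation lemma: two distinct cluster points very close to each other must
have the same integer part, large depths, and share a long digit prefix. -/
lemma sep {m m' : ℤ} {n n' : ℕ} {c c' : ℕ → Bool} {N : ℕ}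
    (hne : val m n c ≠ val m' n' c')
    (hclose : |val m' n' c' - val m n c| < (1/4) * w N) :
    m = m' ∧ N < n ∧ N < n' ∧ ∀ i ≤ N, c i = c' i := by
  have hwN := w_pos N
  have hwle := w_le N
  -- integer parts agree
  have hm : m = m' := by
    by_contra hm
    have := m_gap (n := n) (n' := n') (c := c) (c' := c') hm
    linarith
  subst hm
  -- digits agree in the common range up to N
  have hdig : ∀ i, i ≤ N → i < n → i < n' → c i = c' i := by
    by_contra hd
    push_neg at hd
    have hex : ∃ i, i ≤ N ∧ i < n ∧ i < n' ∧ c i ≠ c' i := by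
      obtain ⟨i, h1, h2, h3, h4⟩ := hd; exact ⟨i, h1, h2, h3, h4⟩
    classical
    obtain ⟨hjN, hjn, hjn', hjne⟩ := Nat.find_spec hex
    set j := Nat.find hex with hjdef
    have hagree : ∀ i < j, c i = c' i := by
      intro i hij
      have hmin := Nat.find_min hex hij
      by_contra hne'
      exact hmin ⟨by omega, by omega, by omega, hne'⟩
    have hwj : w N ≤ w j := w_anti hjN
    rcases Bool.eq_false_or_eq_true (c j) with hcj|hcj
    · have hc'j : c' j = false := by
        cases h : c' j
        · rfl
        · exact (hjne (hcj.trans h.symm)).elim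
      have := (diff_digit m hjn' hjn (fun i hi => (hagree i hi).symm) hc'j hcj).1
      rw [abs_sub_comm] at hclose
      have : (3/4) * w j ≤ |val m n c - val m n' c'| := le_trans this (le_abs_self _)
      linarith
    · have hc'j : c' j = true := by
        cases h : c' j
        · exact (hjne (hcj.trans h.symm)).elim
        · rfl
      have := (diff_digit m hjn hjn' hagree hcj hc'j).1
      have : (3/4) * w j ≤ |val m n' c' - val m n c| := le_trans this (le_abs_self _)
      linarith
  -- depths are large
  have hdepth : N < n ∧ N < n' := by
    rcases lt_trichotomy n n' with hlt|heq|hgt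
    · constructor
      · by_contra hn
        push_neg at hn
        have hval : val m n c = val m n c' :=
          val_congr m n (fun i hi => hdig i (by omega) hi (by omega))
        have := ext_abs m (c := c') (n := n) (n' := n') hlt
        rw [← hval] at this
        have hw : w N ≤ w n := w_anti hn
        linarith
      · by_contra hn
        push_neg at hn
        have hval : val m n c = val m n c' :=
          val_congr m n (fun i hi => hdig i (by omega) hi (by omega))
        have := ext_abs m (c := c') (n := n) (n' := n') hlt
        rw [← hval] at this
        have hw : w N ≤ w n := w_anti (by omega)
        linarith
    · subst heq
      by_contra hn
      have hnN : n ≤ N := by omega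
      exact hne (val_congr m n (fun i hi => hdig i (by omega) hi hi))
    · constructor
      · by_contra hn
        push_neg at hn
        have hval : val m n' c' = val m n' c :=
          val_congr m n' (fun i hi => (hdig i (by omega) (by omega) hi).symm)
        have := ext_abs m (c := c) (n := n') (n' := n) hgt
        rw [← hval, abs_sub_comm] at this
        have hw : w N ≤ w n' := w_anti (by omega)
        linarith
      · by_contra hn
        push_neg at hn
        have hval : val m n' c' = val m n' c :=
          val_congr m n' (fun i hi => (hdig i (by omega) (by omega) hi).symm)
        have := ext_abs m (c := c) (n := n') (n' := n) hgt
        rw [← hval, abs_sub_comm] at this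
        have hw : w N ≤ w n' := w_anti hn
        linarith
  exact ⟨rfl, hdepth.1, hdepth.2, fun i hi => hdig i hi (by omega) (by omega)⟩

lemma isolated_val (m : ℤ) (n : ℕ) (c : ℕ → Bool) :
    ∀ t ∈ S, |t - val m n c| < (1/4) * w n → t = val m n c := by
  intro t ht hclose
  have hwn := w_pos n
  have hwle := w_le n
  rcases ht with ⟨m', rfl⟩|⟨m', n', c', rfl⟩
  · have := u_val_gap m' m n c
    linarith
  · by_contra hne
    have := (sep (Ne.symm hne) hclose).2.1
    omega

lemma isolated_u (m : ℤ) : ∀ t ∈ S, |t - uval m| < 1/4 → t = uval m := by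
  intro t ht hclose
  rcases ht with ⟨m', rfl⟩|⟨m', n', c', rfl⟩
  · by_contra hne
    have : m' ≠ m := fun h => hne (by rw [h])
    have := u_u_gap this
    linarith
  · have := u_val_gap m m' n' c'
    rw [abs_sub_comm] at this
    linarith

end GenericInj
namespace GenericInj

def patch (c : ℕ → Bool) (n : ℕ) (b : Bool) : ℕ → Bool := fun i => if i = n then b else c i

lemma patch_eq_lt {c : ℕ → Bool} {n : ℕ} {b : Bool} (i : ℕ) (h : i < n) :
    patch c n b i = c i := by simp [patch]; intro he; omega

lemma patch_self (c : ℕ → Bool) (n : ℕ) (b : Bool) : patch c n b n = b := by simp [patch]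

lemma val_patch (m : ℤ) (n : ℕ) (c : ℕ → Bool) (b : Bool) :
    val m n (patch c n b) = val m n c :=
  val_congr m n (fun i hi => patch_eq_lt i hi)

/-- right extension: a cluster point slightly to the right of `val m n c`. -/
lemma rightExt (m : ℤ) (n : ℕ) (c : ℕ → Bool) :
    (1/2) * w n < val m (n+1) (patch c n true) - val m n c ∧
    val m (n+1) (patch c n true) - val m n c ≤ (3/4) * w n := by
  have h := ext_true m (c := patch c n true) (n := n) (n' := n+1) (by omega) (patch_self c n true)
  rw [val_patch] at h
  exact h

/-- left extension: a cluster point slightly to the left of `val m n c`. -/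
lemma leftExt (m : ℤ) (n : ℕ) (c : ℕ → Bool) :
    -((1/2) * w n) < val m (n+1) (patch c n false) - val m n c ∧
    val m (n+1) (patch c n false) - val m n c ≤ -((1/4) * w n) := by
  have h := ext_false m (c := patch c n false) (n := n) (n' := n+1) (by omega) (patch_self c n false)
  rw [val_patch] at h
  exact h

lemma dense_S : ∀ r ∈ S, ∀ r' ∈ S, r < r' → ∃ t ∈ S, r < t ∧ t < r' := by
  intro r hr r' hr' hlt
  classical
  rcases hr with ⟨m, rfl⟩|⟨m, n, c, rfl⟩ <;> rcases hr' with ⟨m', rfl⟩|⟨m', n', c', rfl⟩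
  · -- uval m < uval m'
    have hmm : m < m' := by
      have : (m:ℚ) + 1/2 < (m':ℚ) + 1/2 := hlt
      exact_mod_cast (by linarith : (m:ℚ) < (m':ℚ))
    refine ⟨val (m+1) 0 (fun _ => false), val_mem _ _ _, ?_, ?_⟩
    · have := val_gt (m+1) 0 (fun _ => false)
      have h2 : ((m+1:ℤ):ℚ) = (m:ℚ) + 1 := by push_cast; ring
      unfold uval; rw [h2] at this; linarith
    · have := val_lt (m+1) 0 (fun _ => false)
      have h2 : ((m+1:ℤ):ℚ) = (m:ℚ) + 1 := by push_cast; ring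
      have h3 : (m:ℚ) + 1 ≤ (m':ℚ) := by exact_mod_cast hmm
      unfold uval; rw [h2] at this; linarith
  · -- uval m < val m' n' c'
    have h1 := val_lt m' n' c'
    have hmm : m < m' := by
      have : (m:ℚ) + 1/2 < (m':ℚ) + 1/4 := by
        have : uval m < val m' n' c' := hlt
        unfold uval at this; linarith
      exact_mod_cast (by linarith : (m:ℚ) < (m':ℚ))
    have h3 : (m:ℚ) + 1 ≤ (m':ℚ) := by exact_mod_cast hmm
    refine ⟨val m' (n'+1) (patch c' n' false), val_mem _ _ _, ?_, ?_⟩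
    · have := val_gt m' (n'+1) (patch c' n' false)
      unfold uval; linarith
    · have := (leftExt m' n' c').2
      have := w_pos n'
      linarith
  · -- val m n c < uval m'
    have h1 := val_gt m n c
    have hmm : m ≤ m' := by
      have : (m:ℚ) < (m':ℚ) + 1/2 := by
        have : val m n c < uval m' := hlt
        unfold uval at this; linarith
      have : (m:ℚ) < (m':ℚ) + 1 := by linarith
      exact_mod_cast Int.lt_add_one_iff.mp (by exact_mod_cast this)
    have h3 : (m:ℚ) ≤ (m':ℚ) := by exact_mod_cast hmm
    refine ⟨val m (n+1) (patch c n true), val_mem _ _ _, ?_, ?_⟩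
    · have := (rightExt m n c).1
      have := w_pos n
      linarith
    · have := val_lt m (n+1) (patch c n true)
      unfold uval; linarith
  · -- val m n c < val m' n' c'
    have hg1 := val_gt m n c
    have hl1 := val_lt m n c
    have hg2 := val_gt m' n' c'
    have hl2 := val_lt m' n' c'
    have hmm : m ≤ m' := by
      have : (m:ℚ) < (m':ℚ) + 1/4 := by linarith
      have : (m:ℚ) < (m':ℚ) + 1 := by linarith
      exact_mod_cast Int.lt_add_one_iff.mp (by exact_mod_cast this)
    rcases eq_or_lt_of_le hmm with rfl|hmm'
    · -- same integer part
      by_cases hex : ∃ j, j < n ∧ j < n' ∧ c j ≠ c' j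
      · obtain ⟨hjn, hjn', hjne⟩ := Nat.find_spec hex
        set j := Nat.find hex with hjdef
        have hagree : ∀ i < j, c i = c' i := by
          intro i hij
          have hmin := Nat.find_min hex hij
          by_contra hne'
          exact hmin ⟨by omega, by omega, hne'⟩
        have hwj := w_pos j
        have hcj : c j = false ∧ c' j = true := by
          rcases Bool.eq_false_or_eq_true (c j) with h1|h1
          · rcases Bool.eq_false_or_eq_true (c' j) with h2|h2
            · exact (hjne (h1.trans h2.symm)).elim
            · have := (diff_digit m hjn' hjn (fun i hi => (hagree i hi).symm) h2 h1).1
              linarith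
          · rcases Bool.eq_false_or_eq_true (c' j) with h2|h2
            · exact ⟨h1, h2⟩
            · exact (hjne (h1.trans h2.symm)).elim
        -- the truncation at j sits strictly between
        refine ⟨val m j c, val_mem _ _ _, ?_, ?_⟩
        · have d1 := decomp m c hjn.le
          have s1 := R_split c hjn
          rw [dg_false hcj.1] at s1
          have t1 := R_tail_ub c hjn
          have : val m j c = head m j c + (3/2) * w j := rfl
          rw [d1, s1, this]
          have := R_pos c (j+1) n
          linarith
        · have d2 := decomp m c' hjn'.le
          have s2 := R_split c' hjn'
          rw [dg_true hcj.2] at s2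
          have hh : head m j c = head m j c' := head_congr m j hagree
          have : val m j c = head m j c + (3/2) * w j := rfl
          rw [d2, ← hh, s2, this]
          have := R_pos c' (j+1) n'
          linarith
      · push_neg at hex
        rcases lt_trichotomy n n' with hnn|rfl|hnn
        · have hval : val m n c = val m n c' := val_congr m n (fun i hi => hex i hi (by omega))
          have hc'n : c' n = true := by
            rcases Bool.eq_false_or_eq_true (c' n) with h1|h1
            · exact h1
            · have := (ext_false m hnn h1).2
              rw [← hval] at this
              have := w_pos n
              linarith
          have hext := ext_true m hnn hc'n
          rw [← hval] at hext
          refine ⟨val m (n'+1) (patch c' n' false), val_mem _ _ _, ?_, ?_⟩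
          · have h1 := (leftExt m n' c').1
            have h2 : w n' ≤ w (n+1) := w_anti (by omega)
            have h3 := w_succ_le n
            have h4 := w_pos n
            linarith
          · have h1 := (leftExt m n' c').2
            have := w_pos n'
            linarith
        · exact absurd (val_congr m n (fun i hi => hex i hi hi)) (ne_of_lt hlt)
        · have hval : val m n' c' = val m n' c :=
            val_congr m n' (fun i hi => (hex i (by omega) hi).symm)
          have hcn' : c n' = false := by
            rcases Bool.eq_false_or_eq_true (c n') with h1|h1
            · have := (ext_true m hnn h1).1
              rw [← hval] at this
              have := w_pos n'
              linarith
            · exact h1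
          have hext := ext_false m hnn hcn'
          rw [← hval] at hext
          refine ⟨val m (n+1) (patch c n true), val_mem _ _ _, ?_, ?_⟩
          · have := (rightExt m n c).1
            have := w_pos n
            linarith
          · have h1 := (rightExt m n c).2
            have h2 : w n ≤ w (n'+1) := w_anti (by omega)
            have h3 := w_succ_le n'
            have h4 := w_pos n'
            linarith
    · -- m < m'
      refine ⟨uval m, uval_mem m, ?_, ?_⟩
      · unfold uval; linarith
      · have : (m:ℚ) + 1 ≤ (m':ℚ) := by exact_mod_cast hmm'
        unfold uval; linarith

end GenericInj
namespace GenericInj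

def IsIntM (x : ℚ) : Prop := ∃ z : ℤ, x = (z:ℚ)

lemma isInt_int (z : ℤ) : IsIntM (z:ℚ) := ⟨z, rfl⟩
lemma isInt_add {x y : ℚ} (hx : IsIntM x) (hy : IsIntM y) : IsIntM (x + y) := by
  obtain ⟨a, rfl⟩ := hx; obtain ⟨b, rfl⟩ := hy; exact ⟨a + b, by push_cast; ring⟩
lemma isInt_mul {x y : ℚ} (hx : IsIntM x) (hy : IsIntM y) : IsIntM (x * y) := by
  obtain ⟨a, rfl⟩ := hx; obtain ⟨b, rfl⟩ := hy; exact ⟨a * b, by push_cast; ring⟩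
lemma isInt_sum {s : Finset ℕ} {f : ℕ → ℚ} (h : ∀ i ∈ s, IsIntM (f i)) :
    IsIntM (∑ i ∈ s, f i) := by
  classical
  induction s using Finset.induction with
  | empty => exact ⟨0, by simp⟩
  | insert a s' hni ih =>
    rw [Finset.sum_insert hni]
    exact isInt_add (h a (Finset.mem_insert_self a s')) (ih fun i hi => h i (Finset.mem_insert_of_mem hi))

lemma isInt_pow2 (k : ℕ) : IsIntM ((2:ℚ)^k) := ⟨2^k, by push_cast; ring⟩

lemma w_mul_pow2 {i K : ℕ} (h : 2^(i+2) ≤ K) : w i * 2^K = (2:ℚ)^(K - 2^(i+2)) := by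
  unfold w
  have h2 : (2:ℚ)^K = 2^(2^(i+2):ℕ) * 2^(K - 2^(i+2)) := by
    rw [← pow_add]
    congr 1
    omega
  rw [h2, ← mul_assoc, inv_mul_cancel₀ (by positivity), one_mul]

lemma isInt_dg (c : ℕ → Bool) (i : ℕ) : IsIntM (dg c i) := by
  unfold dg; split
  · exact ⟨2, by norm_num⟩
  · exact ⟨1, by norm_num⟩

lemma head_scaled (m : ℤ) (n : ℕ) (c : ℕ → Bool) :
    IsIntM (head m n c * 2^(2^(n+1):ℕ)) := by
  unfold head
  rw [add_mul, Finset.sum_mul]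
  apply isInt_add
  · exact isInt_mul (isInt_int m) (isInt_pow2 _)
  · apply isInt_sum
    intro i hi
    have hi' : i < n := Finset.mem_range.mp hi
    have hle : 2^(i+2) ≤ 2^(n+1) := Nat.pow_le_pow_right (by norm_num) (show i+2 ≤ n+1 by omega)
    rw [mul_assoc, w_mul_pow2 hle]
    exact isInt_mul (isInt_dg c i) (isInt_pow2 _)

lemma val_scaled (m : ℤ) (n : ℕ) (c : ℕ → Bool) :
    IsIntM (val m n c * 2^(2^(n+2)+1:ℕ)) := by
  unfold val
  rw [add_mul]
  apply isInt_add
  · unfold head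
    rw [add_mul, Finset.sum_mul]
    apply isInt_add
    · exact isInt_mul (isInt_int m) (isInt_pow2 _)
    · apply isInt_sum
      intro i hi
      have hi' : i < n := Finset.mem_range.mp hi
      have hle0 : 2^(i+2) ≤ 2^(n+2) := Nat.pow_le_pow_right (by norm_num) (show i+2 ≤ n+2 by omega)
      have hle : 2^(i+2) ≤ 2^(n+2)+1 := by omega
      rw [mul_assoc, w_mul_pow2 hle]
      exact isInt_mul (isInt_dg c i) (isInt_pow2 _)
  · have : (3/2 : ℚ) * w n * 2^(2^(n+2)+1:ℕ) = 3 * (w n * 2^(2^(n+2):ℕ)) := by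
      rw [pow_succ]
      ring
    rw [this, w_mul_pow2 (le_refl _)]
    simp
    exact ⟨3, by norm_num⟩

lemma uval_scaled (m : ℤ) : IsIntM (uval m * 2^(1:ℕ)) :=
  ⟨2*m+1, by unfold uval; push_cast; ring⟩

lemma rat_gap {q t : ℚ} {K : ℕ} (hqt : q ≠ t) (h : IsIntM (t * 2^K)) :
    1/((q.den:ℚ) * 2^K) ≤ |q - t| := by
  obtain ⟨z, hz⟩ := h
  have hD : (0:ℚ) < (q.den:ℚ) * 2^K := by
    have h0 : 0 < q.den := q.pos
    positivity
  set z' : ℤ := q.num * 2^K - z * q.den with hz'def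
  have hkey : (q - t) * ((q.den:ℚ) * 2^K) = (z':ℚ) := by
    have h1 : (q:ℚ) * (q.den:ℚ) = (q.num:ℚ) := by exact_mod_cast q.mul_den_eq_num
    rw [hz'def]
    push_cast
    linear_combination ((2:ℚ)^K) * h1 - ((q.den:ℚ)) * hz
  have hz'ne : z' ≠ 0 := by
    intro h0
    apply hqt
    have h00 : (q - t) * ((q.den:ℚ) * 2^K) = 0 := by rw [hkey, h0]; simp
    rcases mul_eq_zero.mp h00 with h|h
    · exact sub_eq_zero.mp h
    · exact absurd h (ne_of_gt hD)
  have h1 : (1:ℚ) ≤ |(z':ℚ)| := by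
    rw [← Int.cast_abs]
    exact_mod_cast Int.one_le_abs hz'ne
  have h2 : |q - t| * ((q.den:ℚ) * 2^K) = |(z':ℚ)| := by
    rw [← hkey, abs_mul, abs_of_pos hD]
  rw [div_le_iff₀ hD, h2]
  exact h1

end GenericInj
namespace GenericInj

lemma key_nat_ineq (D : ℕ) (hD : 1 ≤ D) : 3 * D * 2^(2^(D+1)) < 2^(2^(D+2)) := by
  have h1 : 3 * D < 2^(2^(D+1)) := by
    have h2 : D < 2^D := Nat.lt_two_pow_self (n := D)
    have h3 : D + 2 ≤ 2^(D+1) := by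
      have := Nat.lt_two_pow_self (n := D+1)
      omega
    have h4 : 2^(D+2) ≤ 2^(2^(D+1)) := Nat.pow_le_pow_right (by norm_num) h3
    have h5 : 3 * D < 4 * 2^D := by omega
    have h6 : 4 * 2^D = 2^(D+2) := by ring
    omega
  have h7 : 2^(2^(D+2)) = 2^(2^(D+1)) * 2^(2^(D+1)) := by
    rw [← pow_add]
    congr 1
    rw [show D+2 = (D+1)+1 from rfl, pow_succ, mul_two]
  rw [h7]
  have h8 : 0 < 2^(2^(D+1)) := Nat.pow_pos (by norm_num)
  calc 3 * D * 2^(2^(D+1)) < 2^(2^(D+1)) * 2^(2^(D+1)) := by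
        exact Nat.mul_lt_mul_of_lt_of_le h1 (le_refl _) h8
    _ = _ := rfl

lemma not_accum_rat {q : ℚ} (hq : q ∉ S) : ∃ ε : ℚ, 0 < ε ∧ ∀ t ∈ S, ε ≤ |t - q| := by
  classical
  set D := q.den with hDdef
  have hD1 : 1 ≤ D := q.pos
  set N := D with hNdef
  refine ⟨min ((1/2) * w N) (1/((D:ℚ) * 2^(2^(N+2)+1:ℕ))), ?_, ?_⟩
  · apply lt_min
    · have := w_pos N; linarith
    · have : (0:ℚ) < (D:ℚ) * 2^(2^(N+2)+1:ℕ) := by positivity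
      positivity
  intro t ht
  have habs : ∀ K K' : ℕ, K ≤ K' → 1/((D:ℚ) * 2^K') ≤ 1/((D:ℚ) * 2^K) := by
    intro K K' hKK
    apply one_div_le_one_div_of_le
    · positivity
    · have : (2:ℚ)^K ≤ 2^K' := pow_le_pow_right₀ (by norm_num) hKK
      have : (0:ℚ) < (D:ℚ) := by exact_mod_cast hD1
      nlinarith
  rcases ht with ⟨m, rfl⟩|⟨m, n, c, rfl⟩
  · -- t = uval m
    have hne : q ≠ uval m := fun h => hq (h ▸ uval_mem m)
    have := rat_gap hne (uval_scaled m)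
    rw [abs_sub_comm]
    refine le_trans (min_le_right _ _) (le_trans (habs 1 _ ?_) this)
    have : 1 ≤ 2^(N+2) := Nat.one_le_two_pow
    omega
  · rcases le_or_gt n N with hn|hn
    · -- shallow point
      have hne : q ≠ val m n c := fun h => hq (h ▸ val_mem m n c)
      have := rat_gap hne (val_scaled m n c)
      rw [abs_sub_comm]
      refine le_trans (min_le_right _ _) (le_trans (habs (2^(n+2)+1) (2^(N+2)+1) ?_) this)
      have : 2^(n+2) ≤ 2^(N+2) := Nat.pow_le_pow_right (by norm_num) (by omega)
      omega
    · -- deep point: use the truncation at level N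
      by_contra hcon
      push_neg at hcon
      have hwN := w_pos N
      have hclose : |val m n c - q| < (1/2) * w N := lt_of_lt_of_le hcon (min_le_left _ _)
      set P := head m N c with hPdef
      have htP : val m n c - P = R c N n := by
        have := decomp m c hn.le
        rw [this]; ring
      have hR1 : w N ≤ R c N n := R_lb c hn
      have hR2 : R c N n ≤ (5/2) * w N := R_ub c hn.le
      have habs2 : -((1/2) * w N) < val m n c - q ∧ val m n c - q < (1/2) * w N := abs_lt.mp hclose
      have hqP1 : (1/2) * w N < q - P := by linarith
      have hqP2 : q - P < 3 * w N := by linarith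
      have hqPne : q ≠ P := by intro h; rw [h] at hqP1; simp at hqP1; linarith
      have hgap := rat_gap hqPne (head_scaled m N c)
      have hqPabs : |q - P| < 3 * w N := by
        rw [abs_of_pos (by linarith)]; exact hqP2
      -- contradiction with the key inequality
      have hkey := key_nat_ineq D hD1
      have hkeyQ : 3 * (D:ℚ) * 2^(2^(D+1)) < 2^(2^(D+2)) := by exact_mod_cast hkey
      have hwval : w N = ((2:ℚ)^(2^(N+2):ℕ))⁻¹ := rfl
      have hDpos : (0:ℚ) < (D:ℚ) := by exact_mod_cast hD1
      have h2pos : (0:ℚ) < (2:ℚ)^(2^(N+1):ℕ) := by positivity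
      have h3pos : (0:ℚ) < (2:ℚ)^(2^(N+2):ℕ) := by positivity
      have hfrac : 1/((D:ℚ) * 2^(2^(N+1):ℕ)) < 3 * w N := lt_of_le_of_lt hgap hqPabs
      rw [hwval] at hfrac
      rw [div_lt_iff₀ (by positivity)] at hfrac
      have hexp : (2:ℚ)^(2^(N+2):ℕ) = 2^(2^(N+1):ℕ) * 2^(2^(N+1):ℕ) := by
        rw [← pow_add]
        congr 1
        rw [show N+2 = (N+1)+1 from rfl, pow_succ, mul_two]
      have : (2:ℚ)^(2^(N+2):ℕ) < 3 * (D:ℚ) * 2^(2^(N+1):ℕ) := by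
        have hh : 1 * ((2:ℚ)^(2^(N+2):ℕ)) < (3 * ((2:ℚ)^(2^(N+2):ℕ))⁻¹ * ((D:ℚ) * 2^(2^(N+1):ℕ))) * ((2:ℚ)^(2^(N+2):ℕ)) := by
          apply mul_lt_mul_of_pos_right hfrac h3pos
        rw [one_mul] at hh
        calc (2:ℚ)^(2^(N+2):ℕ) < 3 * ((2:ℚ)^(2^(N+2):ℕ))⁻¹ * ((D:ℚ) * 2^(2^(N+1):ℕ)) * ((2:ℚ)^(2^(N+2):ℕ)) := hh
          _ = 3 * (D:ℚ) * 2^(2^(N+1):ℕ) * (((2:ℚ)^(2^(N+2):ℕ))⁻¹ * ((2:ℚ)^(2^(N+2):ℕ))) := by ring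
          _ = 3 * (D:ℚ) * 2^(2^(N+1):ℕ) := by rw [inv_mul_cancel₀ (ne_of_gt h3pos), mul_one]
      rw [hNdef] at this
      linarith [hkeyQ, this]

end GenericInj
namespace GenericInj

def accL (x : ℝ) : Prop := ∀ δ : ℝ, 0 < δ → ∃ s ∈ S, x - δ < (s:ℝ) ∧ (s:ℝ) < x
def accR (y : ℝ) : Prop := ∀ δ : ℝ, 0 < δ → ∃ s ∈ S, y < (s:ℝ) ∧ (s:ℝ) < y + δ

lemma extractL {x : ℝ} (hx : accL x) (N : ℕ) :
    ∃ m n c, N < n ∧ x - ((1/16) * w N : ℚ) < (val m n c : ℝ) ∧ ((val m n c : ℝ)) < x := by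
  have hδ : (0:ℝ) < ((1/16) * w N : ℚ) := by
    have := w_pos N
    exact_mod_cast (by linarith : (0:ℚ) < (1/16) * w N)
  obtain ⟨r₁, hr₁S, hr₁l, hr₁u⟩ := hx _ hδ
  obtain ⟨r₂, hr₂S, hr₂l, hr₂u⟩ := hx ((x - r₁)) (by linarith)
  have hr12 : (r₁:ℝ) < (r₂:ℝ) := by linarith
  have hr12' : r₁ < r₂ := by exact_mod_cast hr12
  have hclose : |r₂ - r₁| < (1/4) * w N := by
    have h1 : |(r₂:ℝ) - (r₁:ℝ)| < ((1/16) * w N : ℚ) := by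
      rw [abs_of_pos (by linarith)]
      linarith
    have h2 : |r₂ - r₁| < (1/16) * w N := by
      rw [← Rat.cast_lt (K := ℝ)]
      push_cast
      rw [← Rat.cast_sub, ← Rat.cast_abs] at h1
      push_cast at h1
      exact h1
    have := w_pos N
    linarith
  have hclose' := hclose
  rw [abs_sub_comm] at hclose'
  have hwN := w_pos N
  have hwle := w_le N
  rcases hr₂S with ⟨m, rfl⟩|⟨m, n, c, rfl⟩
  · -- r₂ is a u point : impossible since r₁ is too close
    exfalso
    rcases hr₁S with ⟨m', rfl⟩|⟨m', n', c', rfl⟩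
    · have := u_u_gap (show m ≠ m' by intro h; rw [h] at hr12'; exact lt_irrefl _ hr12')
      linarith
    · have := u_val_gap m m' n' c'
      linarith
  · rcases hr₁S with ⟨m', rfl⟩|⟨m', n', c', rfl⟩
    · exfalso
      have := u_val_gap m' m n c
      linarith
    · have hsep := sep (show val m' n' c' ≠ val m n c from fun h => by
        rw [h] at hr12'; exact lt_irrefl _ hr12') hclose
      exact ⟨m, n, c, hsep.2.2.1, by linarith, hr₂u⟩

lemma extractR {y : ℝ} (hy : accR y) (N : ℕ) :
    ∃ m n c, N < n ∧ y < (val m n c : ℝ) ∧ ((val m n c : ℝ)) < y + ((1/16) * w N : ℚ) := by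
  have hδ : (0:ℝ) < ((1/16) * w N : ℚ) := by
    have := w_pos N
    exact_mod_cast (by linarith : (0:ℚ) < (1/16) * w N)
  obtain ⟨r₁, hr₁S, hr₁l, hr₁u⟩ := hy _ hδ
  obtain ⟨r₂, hr₂S, hr₂l, hr₂u⟩ := hy ((r₁:ℝ) - y) (by linarith)
  have hr12 : (r₂:ℝ) < (r₁:ℝ) := by linarith
  have hr12' : r₂ < r₁ := by exact_mod_cast hr12
  have hclose : |r₂ - r₁| < (1/4) * w N := by
    have h1 : |(r₂:ℝ) - (r₁:ℝ)| < ((1/16) * w N : ℚ) := by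
      rw [abs_of_neg (by linarith)]
      linarith
    have h2 : |r₂ - r₁| < (1/16) * w N := by
      rw [← Rat.cast_lt (K := ℝ)]
      push_cast
      rw [← Rat.cast_sub, ← Rat.cast_abs] at h1
      push_cast at h1
      exact h1
    have := w_pos N
    linarith
  have hclose' := hclose
  rw [abs_sub_comm] at hclose'
  have hwN := w_pos N
  have hwle := w_le N
  rcases hr₂S with ⟨m, rfl⟩|⟨m, n, c, rfl⟩
  · exfalso
    rcases hr₁S with ⟨m', rfl⟩|⟨m', n', c', rfl⟩
    · have := u_u_gap (show m ≠ m' by intro h; rw [h] at hr12'; exact lt_irrefl _ hr12')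
      linarith
    · have := u_val_gap m m' n' c'
      linarith
  · rcases hr₁S with ⟨m', rfl⟩|⟨m', n', c', rfl⟩
    · exfalso
      have := u_val_gap m' m n c
      linarith
    · have hsep := sep (show val m' n' c' ≠ val m n c from fun h => by
        rw [h] at hr12'; exact lt_irrefl _ hr12') hclose
      exact ⟨m, n, c, hsep.2.2.1, hr₂l, by linarith⟩

lemma w_small (ε : ℚ) (hε : 0 < ε) : ∃ N : ℕ, w N < ε := by
  obtain ⟨N, hN⟩ := exists_nat_gt (1/ε)
  refine ⟨N, ?_⟩
  have h2 : (N:ℚ)+1 ≤ (2:ℚ)^(2^(N+2):ℕ) := by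
    have hnat : N+1 ≤ 2^(2^(N+2)) := by
      have g1 : N + 1 ≤ 2^(N+2) := by
        have := Nat.lt_two_pow_self (n := N+2)
        omega
      have g2 : 2^(N+2) ≤ 2^(2^(N+2)) := Nat.pow_le_pow_right (by norm_num) (by
        have := Nat.lt_two_pow_self (n := N+2)
        omega)
      omega
    exact_mod_cast hnat
  have h3 : (0:ℚ) < (N:ℚ)+1 := by positivity
  have h4 : w N ≤ 1/((N:ℚ)+1) := by
    unfold w
    rw [← one_div]
    exact one_div_le_one_div_of_le h3 h2
  have h5 : 1/((N:ℚ)+1) < ε := by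
    rw [div_lt_iff₀ h3]
    rw [div_lt_iff₀ hε] at hN
    nlinarith
  linarith

end GenericInj
namespace GenericInj

lemma wR_small (ε : ℝ) (hε : 0 < ε) : ∃ N : ℕ, ((w N : ℚ) : ℝ) < ε := by
  obtain ⟨q, hq1, hq2⟩ := exists_rat_btwn hε
  obtain ⟨N, hN⟩ := w_small q (by exact_mod_cast hq1)
  refine ⟨N, ?_⟩
  have : ((w N : ℚ) : ℝ) < (q:ℝ) := by exact_mod_cast hN
  linarith

lemma key_gap {x y : ℝ} (hxy : x < y) (hgap : ∀ s ∈ S, ¬((x < (s:ℝ)) ∧ ((s:ℝ) < y)))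
    (hx : accL x) (hy : accR y) : False := by
  classical
  obtain ⟨N, hN⟩ := wR_small ((y - x)/3) (by linarith)
  obtain ⟨m, n, c, hn, hr1, hr2⟩ := extractL hx N
  obtain ⟨m', n', c', hn', hs1, hs2⟩ := extractR hy N
  have hwN := w_pos N
  have hwNle := w_le N
  have hwNR : (0:ℝ) < ((w N : ℚ):ℝ) := by exact_mod_cast hwN
  have hwNleR : ((w N : ℚ):ℝ) ≤ 1/16 := by
    have := (Rat.cast_le (K := ℝ)).mpr hwNle
    push_cast at this
    linarith
  -- basic real facts
  have hrx : (val m n c : ℝ) < x := hr2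
  have hsy : y < (val m' n' c' : ℝ) := hs1
  have hrs : val m n c < val m' n' c' := by
    have : (val m n c : ℝ) < (val m' n' c' : ℝ) := by linarith
    exact_mod_cast this
  have hg1 := val_gt m n c
  have hl1 := val_lt m n c
  have hg2 := val_gt m' n' c'
  have hl2 := val_lt m' n' c'
  have hmm : m ≤ m' := by
    have : (m:ℚ) < (m':ℚ) + 1/4 := by linarith
    have : (m:ℚ) < (m':ℚ) + 1 := by linarith
    exact_mod_cast Int.lt_add_one_iff.mp (by exact_mod_cast this)
  have hη : ((1/16 * w N : ℚ) : ℝ) ≤ 1/256 := by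
    have : ((1/16 * w N : ℚ) : ℝ) = (1/16 : ℝ) * ((w N : ℚ):ℝ) := by push_cast; ring
    rw [this]; linarith
  have hηpos : (0:ℝ) < ((1/16 * w N : ℚ) : ℝ) := by
    have : (0:ℚ) < 1/16 * w N := by linarith
    exact_mod_cast this
  rcases eq_or_lt_of_le hmm with rfl|hmm'
  · -- same integer part
    by_cases hagree : ∀ i ≤ N, c i = c' i
    · -- long common prefix : y - x would be too small
      have hhead : head m (N+1) c = head m (N+1) c' :=
        head_congr m (N+1) (fun i hi => hagree i (by omega))
      have d1 := decomp m c (show N+1 ≤ n by omega)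
      have d2 := decomp m c' (show N+1 ≤ n' by omega)
      have hub := R_ub c' (show N+1 ≤ n' by omega)
      have hpos := R_pos c (N+1) n
      have hsr : val m n' c' - val m n c ≤ (5/2) * w (N+1) := by
        rw [d1, d2, ← hhead]; linarith
      have hsrR : (val m n' c' : ℝ) - (val m n c : ℝ) ≤ ((5/2) * w (N+1) : ℚ) := by
        have := (Rat.cast_le (K := ℝ)).mpr hsr
        push_cast at this ⊢
        linarith
      have hw1 : ((5/2) * w (N+1) : ℚ) ≤ ((5/2) * w N : ℚ) := by
        have := w_anti (show N ≤ N+1 by omega)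
        linarith
      have hw1R : (((5/2) * w (N+1) : ℚ):ℝ) ≤ (((5/2) * w N : ℚ):ℝ) := by exact_mod_cast hw1
      have hw2R : (((5/2) * w N : ℚ):ℝ) = (5/2:ℝ) * ((w N : ℚ):ℝ) := by push_cast; ring
      have : y - x < (5/2:ℝ) * ((w N : ℚ):ℝ) := by linarith
      linarith
    · -- first disagreement gives a point of S strictly inside (x, y)
      push_neg at hagree
      have hex : ∃ j, j ≤ N ∧ c j ≠ c' j := hagree
      obtain ⟨hjN, hjne⟩ := Nat.find_spec hex
      set j := Nat.find hex with hjdef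
      have hagree' : ∀ i < j, c i = c' i := by
        intro i hij
        have hmin := Nat.find_min hex hij
        by_contra hne'
        exact hmin ⟨by omega, hne'⟩
      have hjn : j < n := by omega
      have hjn' : j < n' := by omega
      have hwj := w_pos j
      have hwjN : w N ≤ w j := w_anti hjN
      have hcj : c j = false ∧ c' j = true := by
        rcases Bool.eq_false_or_eq_true (c j) with h1|h1
        · rcases Bool.eq_false_or_eq_true (c' j) with h2|h2
          · exact (hjne (h1.trans h2.symm)).elim
          · have := (diff_digit m hjn' hjn (fun i hi => (hagree' i hi).symm) h2 h1).1
            linarith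
        · rcases Bool.eq_false_or_eq_true (c' j) with h2|h2
          · exact ⟨h1, h2⟩
          · exact (hjne (h1.trans h2.symm)).elim
      -- the truncation t = val m j c lies strictly between x and y
      have d1 := decomp m c hjn.le
      have s1 := R_split c hjn
      rw [dg_false hcj.1] at s1
      have t1 := R_tail_ub c hjn
      have d2 := decomp m c' hjn'.le
      have s2 := R_split c' hjn'
      rw [dg_true hcj.2] at s2
      have p2 := R_pos c' (j+1) n'
      have hh : head m j c = head m j c' := head_congr m j hagree'
      have htdef : val m j c = head m j c + (3/2) * w j := rfl
      have htr : (1/4) * w j ≤ val m j c - val m n c := by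
        rw [d1, s1, htdef]; linarith
      have hst : (1/2) * w j ≤ val m n' c' - val m j c := by
        rw [d2, ← hh, s2, htdef]; linarith
      have htrR : ((1/4) * w j : ℚ) ≤ (val m j c : ℝ) - (val m n c : ℝ) := by
        have := (Rat.cast_le (K := ℝ)).mpr htr
        push_cast at this ⊢
        linarith
      have hstR : ((1/2) * w j : ℚ) ≤ (val m n' c' : ℝ) - (val m j c : ℝ) := by
        have := (Rat.cast_le (K := ℝ)).mpr hst
        push_cast at this ⊢
        linarith
      have hwjR : (((1/4) * w j : ℚ):ℝ) = (1/4:ℝ) * ((w j:ℚ):ℝ) := by push_cast; ring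
      have hwjR2 : (((1/2) * w j : ℚ):ℝ) = (1/2:ℝ) * ((w j:ℚ):ℝ) := by push_cast; ring
      have hηR : ((1/16 * w N : ℚ) : ℝ) = (1/16:ℝ) * ((w N:ℚ):ℝ) := by push_cast; ring
      have hwjNR : ((w N:ℚ):ℝ) ≤ ((w j:ℚ):ℝ) := by exact_mod_cast hwjN
      refine hgap (val m j c) (val_mem m j c) ⟨?_, ?_⟩
      · -- x < t
        rw [hwjR] at htrR
        rw [hηR] at hr1
        linarith
      · -- t < y
        rw [hwjR2] at hstR
        rw [hηR] at hs2
        linarith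
  · -- different integer parts : uval m lies strictly between
    refine hgap (uval m) (uval_mem m) ⟨?_, ?_⟩
    · have hrm : (val m n c : ℚ) < (m:ℚ) + 1/4 := hl1
      have hrmR : (val m n c : ℝ) < (m:ℝ) + 1/4 := by
        have := (Rat.cast_lt (K := ℝ)).mpr hrm
        push_cast at this
        linarith
      have huR : ((uval m : ℚ):ℝ) = (m:ℝ) + 1/2 := by unfold uval; push_cast; ring
      rw [huR]
      linarith
    · have hm1 : (m:ℚ) + 1 ≤ (m':ℚ) := by exact_mod_cast hmm'
      have hsR : (m:ℝ) + 1 < (val m' n' c' : ℝ) := by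
        have : (m:ℚ) + 1 < val m' n' c' := by linarith
        exact_mod_cast this
      have huR : ((uval m : ℚ):ℝ) = (m:ℝ) + 1/2 := by unfold uval; push_cast; ring
      rw [huR]
      linarith
end GenericInj
namespace GenericInj

instance : Nonempty ↥S := ⟨⟨uval 0, uval_mem 0⟩⟩

instance : DenselyOrdered ↥S := ⟨by
  rintro ⟨a, ha⟩ ⟨b, hb⟩ hab
  obtain ⟨t, htS, h1, h2⟩ := dense_S a ha b hb (Subtype.mk_lt_mk.mp hab)
  exact ⟨⟨t, htS⟩, Subtype.mk_lt_mk.mpr h1, Subtype.mk_lt_mk.mpr h2⟩⟩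

instance : NoMaxOrder ↥S := ⟨by
  rintro ⟨a, ha⟩
  refine ⟨⟨uval (⌈a⌉ + 1), uval_mem _⟩, Subtype.mk_lt_mk.mpr ?_⟩
  have := Int.le_ceil a
  unfold uval
  push_cast
  linarith⟩

instance : NoMinOrder ↥S := ⟨by
  rintro ⟨a, ha⟩
  refine ⟨⟨uval (⌊a⌋ - 1), uval_mem _⟩, Subtype.mk_lt_mk.mpr ?_⟩
  have := Int.floor_le a
  unfold uval
  push_cast
  linarith⟩

lemma ereal_sSup (A : Set ℝ) (hne : A.Nonempty) (hbdd : BddAbove A) :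
    sSup ((fun r : ℝ => (r : EReal)) '' A) = ((sSup A : ℝ) : EReal) := by
  apply le_antisymm
  · apply sSup_le
    rintro b ⟨a, ha, rfl⟩
    exact EReal.coe_le_coe_iff.mpr (le_csSup hbdd ha)
  · obtain ⟨a₀, ha₀⟩ := hne
    have hub : ∀ a ∈ A, (a : EReal) ≤ sSup ((fun r : ℝ => (r : EReal)) '' A) :=
      fun a ha => le_sSup ⟨a, ha, rfl⟩
    have hle : (a₀ : EReal) ≤ sSup ((fun r : ℝ => (r : EReal)) '' A) := hub a₀ ha₀
    generalize hgen : sSup ((fun r : ℝ => (r : EReal)) '' A) = b at hle hub ⊢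
    induction b using EReal.rec with
    | bot => simp at hle
    | coe r =>
      apply EReal.coe_le_coe_iff.mpr
      exact csSup_le ⟨a₀, ha₀⟩ (fun a ha => EReal.coe_le_coe_iff.mp (hub a ha))
    | top => exact le_top

lemma ereal_sInf (B : Set ℝ) (hne : B.Nonempty) (hbdd : BddBelow B) :
    sInf ((fun r : ℝ => (r : EReal)) '' B) = ((sInf B : ℝ) : EReal) := by
  apply le_antisymm
  · obtain ⟨b₀, hb₀⟩ := hne
    have hlb : ∀ b ∈ B, sInf ((fun r : ℝ => (r : EReal)) '' B) ≤ (b : EReal) :=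
      fun b hb => sInf_le ⟨b, hb, rfl⟩
    have hle : sInf ((fun r : ℝ => (r : EReal)) '' B) ≤ (b₀ : EReal) := hlb b₀ hb₀
    generalize hgen : sInf ((fun r : ℝ => (r : EReal)) '' B) = b at hle hlb ⊢
    induction b using EReal.rec with
    | bot => exact bot_le
    | coe r =>
      apply EReal.coe_le_coe_iff.mpr
      exact le_csInf ⟨b₀, hb₀⟩ (fun b hb => EReal.coe_le_coe_iff.mp (hlb b hb))
    | top => simp at hle
  · apply le_sInf
    rintro b ⟨a, ha, rfl⟩
    exact EReal.coe_le_coe_iff.mpr (csInf_le hbdd ha)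

end GenericInj

open GenericInj

/-- There exists a generic injection: a strictly increasing `g : ℚ → ℚ` with image
unbounded below and above, having no irrational discontinuity points, and all of
whose image's limit points in `ℝ` are irrational. -/
theorem exists_generic_injection :
    ∃ g : ℚ → ℚ, StrictMono g ∧
      (∀ q : ℚ, ∃ x : ℚ, g x < q) ∧ (∀ q : ℚ, ∃ x : ℚ, q < g x) ∧
      (∀ γ : ℝ, Irrational γ →
        sSup ((fun p : ℚ => ((g p : ℝ) : EReal)) '' {p : ℚ | (p : ℝ) < γ}) =
        sInf ((fun p : ℚ => ((g p : ℝ) : EReal)) '' {p : ℚ | γ < (p : ℝ)})) ∧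
      (∀ γ : ℝ, γ ∈ closure ((Set.range fun q : ℚ => (g q : ℝ)) \ {γ}) →
        Irrational γ) := by
  classical
  obtain ⟨e⟩ := Order.iso_of_countable_dense ℚ ↥S
  set g : ℚ → ℚ := fun q => (e q : ℚ) with hgdef
  have hmono : StrictMono g := fun a b h => Subtype.coe_lt_coe.mpr (e.strictMono h)
  have hmem : ∀ p, g p ∈ S := fun p => (e p).2
  have hsurj : ∀ s ∈ S, ∃ p, g p = s := fun s hs =>
    ⟨e.symm ⟨s, hs⟩, congrArg Subtype.val (e.apply_symm_apply ⟨s, hs⟩)⟩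
  refine ⟨g, hmono, ?_, ?_, ?_, ?_⟩
  · -- unbounded below
    intro q
    obtain ⟨p, hp⟩ := hsurj (uval (⌊q⌋ - 1)) (uval_mem _)
    refine ⟨p, ?_⟩
    rw [hp]
    unfold uval
    have := Int.floor_le q
    push_cast
    linarith
  · -- unbounded above
    intro q
    obtain ⟨p, hp⟩ := hsurj (uval ⌈q⌉) (uval_mem _)
    refine ⟨p, ?_⟩
    rw [hp]
    unfold uval
    have := Int.le_ceil q
    push_cast
    linarith
  · -- continuity at irrationals
    intro γ hγ
    set A : Set ℝ := (fun p : ℚ => ((g p : ℚ):ℝ)) '' {p : ℚ | (p:ℝ) < γ} with hA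
    set B : Set ℝ := (fun p : ℚ => ((g p : ℚ):ℝ)) '' {p : ℚ | γ < (p:ℝ)} with hB
    obtain ⟨pl, hpl⟩ := exists_rat_lt γ
    obtain ⟨pu, hpu⟩ := exists_rat_gt γ
    have hAne : A.Nonempty := ⟨_, ⟨pl, hpl, rfl⟩⟩
    have hBne : B.Nonempty := ⟨_, ⟨pu, hpu, rfl⟩⟩
    have hAB : ∀ a ∈ A, ∀ b ∈ B, a < b := by
      rintro a ⟨p, hp, rfl⟩ b ⟨p', hp', rfl⟩
      have hpp : (p:ℝ) < (p':ℝ) := lt_trans hp hp'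
      have : p < p' := by exact_mod_cast hpp
      show ((g p : ℚ):ℝ) < ((g p' : ℚ):ℝ)
      exact_mod_cast hmono this
    have hAbdd : BddAbove A := by
      refine ⟨((g pu : ℚ):ℝ), ?_⟩
      rintro a ⟨p, hp, rfl⟩
      exact (hAB _ ⟨p, hp, rfl⟩ _ ⟨pu, hpu, rfl⟩).le
    have hBbdd : BddBelow B := by
      refine ⟨((g pl : ℚ):ℝ), ?_⟩
      rintro b ⟨p, hp, rfl⟩
      exact (hAB _ ⟨pl, hpl, rfl⟩ _ ⟨p, hp, rfl⟩).le
    have hxy : sSup A ≤ sInf B :=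
      csSup_le hAne (fun a ha => le_csInf hBne (fun b hb => (hAB a ha b hb).le))
    have heq : sSup A = sInf B := by
      rcases eq_or_lt_of_le hxy with h|h
      · exact h
      exfalso
      refine key_gap h ?_ ?_ ?_
      · -- no S point strictly between
        rintro s hs ⟨h1, h2⟩
        obtain ⟨p, rfl⟩ := hsurj s hs
        have hpγ : (p:ℝ) ≠ γ := fun hc => hγ ⟨p, hc⟩
        rcases lt_or_gt_of_ne hpγ with hlt|hgt
        · have : ((g p : ℚ):ℝ) ≤ sSup A := le_csSup hAbdd ⟨p, hlt, rfl⟩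
          linarith
        · have : sInf B ≤ ((g p : ℚ):ℝ) := csInf_le hBbdd ⟨p, hgt, rfl⟩
          linarith
      · -- accL (sSup A)
        intro δ hδ
        obtain ⟨a, ha, hagt⟩ := exists_lt_of_lt_csSup hAne (by linarith : sSup A - δ < sSup A)
        obtain ⟨p, hp, rfl⟩ := ha
        obtain ⟨p', hp1, hp2⟩ := exists_rat_btwn (show ((p:ℚ):ℝ) < γ from hp)
        have hplt : p < p' := by exact_mod_cast hp1
        have hstep : ((g p : ℚ):ℝ) < ((g p' : ℚ):ℝ) := by exact_mod_cast hmono hplt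
        have hle' : ((g p' : ℚ):ℝ) ≤ sSup A := le_csSup hAbdd ⟨p', hp2, rfl⟩
        exact ⟨g p, hmem p, hagt, by linarith⟩
      · -- accR (sInf B)
        intro δ hδ
        obtain ⟨b, hb, hblt⟩ := exists_lt_of_csInf_lt hBne (by linarith : sInf B < sInf B + δ)
        obtain ⟨p, hp, rfl⟩ := hb
        obtain ⟨p', hp1, hp2⟩ := exists_rat_btwn (show γ < ((p:ℚ):ℝ) from hp)
        have hplt : p' < p := by exact_mod_cast hp2
        have hstep : ((g p' : ℚ):ℝ) < ((g p : ℚ):ℝ) := by exact_mod_cast hmono hplt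
        have hle' : sInf B ≤ ((g p' : ℚ):ℝ) := csInf_le hBbdd ⟨p', hp1, rfl⟩
        exact ⟨g p, hmem p, by linarith, hblt⟩
    have himA : (fun p : ℚ => ((g p : ℝ) : EReal)) '' {p : ℚ | (p : ℝ) < γ}
        = (fun r : ℝ => (r : EReal)) '' A := by
      rw [hA, Set.image_image]
    have himB : (fun p : ℚ => ((g p : ℝ) : EReal)) '' {p : ℚ | γ < (p : ℝ)}
        = (fun r : ℝ => (r : EReal)) '' B := by
      rw [hB, Set.image_image]
    rw [himA, himB, ereal_sSup A hAne hAbdd, ereal_sInf B hBne hBbdd, heq]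
  · -- all limit points of the image are irrational
    intro γ hγcl
    by_contra hγ
    have : γ ∈ Set.range ((↑) : ℚ → ℝ) := not_not.mp hγ
    obtain ⟨q, rfl⟩ := this
    have hiso : ∃ ε : ℚ, 0 < ε ∧ ∀ t ∈ S, |t - q| < ε → t = q := by
      by_cases hqS : q ∈ S
      · rcases hqS with ⟨m, rfl⟩|⟨m, n, c, rfl⟩
        · exact ⟨1/4, by norm_num, isolated_u m⟩
        · exact ⟨(1/4) * w n, by have := w_pos n; linarith, isolated_val m n c⟩
      · obtain ⟨ε, hε, hsep⟩ := not_accum_rat hqS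
        exact ⟨ε, hε, fun t ht habs => absurd (hsep t ht) (by linarith)⟩
    obtain ⟨ε, hεpos, hiso⟩ := hiso
    have hεR : (0:ℝ) < (ε:ℝ) := by exact_mod_cast hεpos
    obtain ⟨b, hbmem, hbdist⟩ := Metric.mem_closure_iff.mp hγcl (ε:ℝ) hεR
    obtain ⟨⟨p, rfl⟩, hbne⟩ := hbmem
    have htq : |g p - q| < ε := by
      have h1 : |((q:ℚ):ℝ) - ((g p : ℚ):ℝ)| < (ε:ℝ) := by
        rw [← Real.dist_eq]; exact hbdist
      have h2 : |q - g p| < ε := by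
        rw [← Rat.cast_lt (K := ℝ)]
        push_cast
        rw [← Rat.cast_sub, ← Rat.cast_abs] at h1
        push_cast at h1
        exact h1
      rw [abs_sub_comm] at h2
      exact h2
    have := hiso (g p) (hmem p) htq
    apply hbne
    simp only [Set.mem_singleton_iff]
    exact_mod_cast congrArg (fun t : ℚ => (t:ℝ)) this
end

section
/- Let g : ℚ → ℚ be a strictly increasing function that is unbounded below and above, has no irrational discontinuity points, and whose image has only irrational limit points (a generic injection). Then for every y ∈ ℚ, the quantities g^L(y) = sup g⁻¹((-∞,y)) and g^R(y) = inf g⁻¹((y,+∞)) coincide and are rational; consequently, g is left-invertible in the monoid of monotone functions on ℚ: there exists a monotone g† : ℚ → ℚ with g† ∘ g = id. -/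
open Set

private lemma sup_coe_lt (x : ℚ) :
    sSup ((fun p : ℚ => ((p : ℝ) : EReal)) '' {p : ℚ | p < x}) = ((x : ℝ) : EReal) := by
  apply le_antisymm
  · apply sSup_le
    rintro z ⟨p, hp, rfl⟩
    have hp' : p < x := hp
    show ((p : ℝ) : EReal) ≤ ((x : ℝ) : EReal)
    exact_mod_cast hp'.le
  · refine le_of_forall_lt fun c hc => ?_
    obtain ⟨q, hq1, hq2⟩ := EReal.exists_rat_btwn_of_lt hc
    have hq3 : q < x := by exact_mod_cast hq2
    exact lt_sSup_iff.mpr ⟨((q : ℝ) : EReal), ⟨q, hq3, rfl⟩, hq1⟩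

private lemma inf_coe_gt (x : ℚ) :
    sInf ((fun p : ℚ => ((p : ℝ) : EReal)) '' {p : ℚ | x < p}) = ((x : ℝ) : EReal) := by
  apply le_antisymm
  · refine le_of_forall_gt fun c hc => ?_
    obtain ⟨q, hq1, hq2⟩ := EReal.exists_rat_btwn_of_lt hc
    have hq3 : x < q := by exact_mod_cast hq1
    exact sInf_lt_iff.mpr ⟨((q : ℝ) : EReal), ⟨q, hq3, rfl⟩, hq2⟩
  · apply le_sInf
    rintro z ⟨p, hp, rfl⟩
    have hp' : x < p := hp
    show ((x : ℝ) : EReal) ≤ ((p : ℝ) : EReal)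
    exact_mod_cast hp'.le

/-- For a generic injection `g : ℚ → ℚ` (strictly increasing, unbounded both
sides, no irrational discontinuity points, image with only irrational limit
points), the quantities `g^L(y) = sup g⁻¹((-∞,y))` and `g^R(y) = inf g⁻¹((y,+∞))`
coincide and are rational for every `y : ℚ`; consequently `g` is left-invertible
in the monoid of monotone functions on `ℚ`. -/
theorem generic_injection_left_invertible (g : ℚ → ℚ) (hsm : StrictMono g)
    (hub : ∀ q : ℚ, ∃ x : ℚ, g x < q) (hua : ∀ q : ℚ, ∃ x : ℚ, q < g x)
    (hcont : ∀ γ : ℝ, Irrational γ →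
      sSup ((fun p : ℚ => ((g p : ℝ) : EReal)) '' {p : ℚ | (p : ℝ) < γ}) =
      sInf ((fun p : ℚ => ((g p : ℝ) : EReal)) '' {p : ℚ | γ < (p : ℝ)}))
    (hLP : ∀ γ : ℝ, γ ∈ closure ((Set.range fun q : ℚ => (g q : ℝ)) \ {γ}) →
      Irrational γ) :
    (∀ y : ℚ, ∃ x : ℚ,
      sSup ((fun p : ℚ => ((p : ℝ) : EReal)) '' {p : ℚ | g p < y}) =
        ((x : ℝ) : EReal) ∧
      sInf ((fun p : ℚ => ((p : ℝ) : EReal)) '' {p : ℚ | y < g p}) =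
        ((x : ℝ) : EReal)) ∧
    (∃ d : ℚ → ℚ, Monotone d ∧ ∀ x : ℚ, d (g x) = x) := by
  have gxset : ∀ x : ℚ, {p : ℚ | g p < g x} = {p : ℚ | p < x} := by
    intro x; ext p; simp [hsm.lt_iff_lt]
  have gxset' : ∀ x : ℚ, {p : ℚ | g x < g p} = {p : ℚ | x < p} := by
    intro x; ext p; simp [hsm.lt_iff_lt]
  have key : ∀ y : ℚ, ∃ x : ℚ,
      sSup ((fun p : ℚ => ((p : ℝ) : EReal)) '' {p : ℚ | g p < y}) =
        ((x : ℝ) : EReal) ∧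
      sInf ((fun p : ℚ => ((p : ℝ) : EReal)) '' {p : ℚ | y < g p}) =
        ((x : ℝ) : EReal) := by
    intro y
    by_cases hy : ∃ x₀ : ℚ, g x₀ = y
    · obtain ⟨x₀, rfl⟩ := hy
      exact ⟨x₀, by rw [gxset x₀]; exact sup_coe_lt x₀,
        by rw [gxset' x₀]; exact inf_coe_gt x₀⟩
    · set A : Set ℚ := {p : ℚ | g p < y} with hA
      set B : Set ℚ := {p : ℚ | y < g p} with hB
      have hABc : ∀ p : ℚ, p ∈ A ∨ p ∈ B := by
        intro p
        rcases lt_trichotomy (g p) y with h | h | h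
        · exact Or.inl h
        · exact absurd ⟨p, h⟩ hy
        · exact Or.inr h
      set a := sSup ((fun p : ℚ => ((p : ℝ) : EReal)) '' A) with ha
      set b := sInf ((fun p : ℚ => ((p : ℝ) : EReal)) '' B) with hb
      obtain ⟨pA, hpA⟩ := hub y
      obtain ⟨pB, hpB⟩ := hua y
      have hmemA : ∀ p ∈ A, ((p : ℝ) : EReal) ≤ a := by
        intro p hp; exact le_sSup ⟨p, hp, rfl⟩
      have hmemB : ∀ p ∈ B, b ≤ ((p : ℝ) : EReal) := by
        intro p hp; exact sInf_le ⟨p, hp, rfl⟩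
      have hAB : ∀ p ∈ A, ∀ p' ∈ B, p < p' := by
        intro p hp p' hp'
        exact hsm.lt_iff_lt.mp (hp.trans hp')
      have hab : a ≤ b := by
        apply sSup_le
        rintro z ⟨p, hp, rfl⟩
        apply le_sInf
        rintro w ⟨p', hp', rfl⟩
        show ((p : ℝ) : EReal) ≤ ((p' : ℝ) : EReal)
        exact_mod_cast (hAB p hp p' hp').le
      have haeqb : a = b := by
        refine hab.antisymm (not_lt.mp fun hlt => ?_)
        obtain ⟨q, hq1, hq2⟩ := EReal.exists_rat_btwn_of_lt hlt
        rcases hABc q with h | h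
        · exact absurd hq1 (not_lt.mpr (hmemA q h))
        · exact absurd hq2 (not_lt.mpr (hmemB q h))
      have hane : a ≠ ⊥ := by
        intro h
        have := hmemA pA hpA
        rw [h, le_bot_iff] at this
        exact (EReal.coe_ne_bot _) this
      have hant : a ≠ ⊤ := by
        intro h
        have := hmemB pB hpB
        rw [← haeqb, h, top_le_iff] at this
        exact (EReal.coe_ne_top _) this
      have hcoe : ((a.toReal : ℝ) : EReal) = a := EReal.coe_toReal hant hane
      set γ : ℝ := a.toReal with hγ
      have hrat : ∃ x : ℚ, (x : ℝ) = γ := by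
        by_contra hirr'
        have hirr : Irrational γ := by
          rw [Irrational]
          rintro ⟨x, hx⟩
          exact hirr' ⟨x, hx⟩
        have setA : {p : ℚ | (p : ℝ) < γ} = A := by
          ext p
          constructor
          · intro hp
            rcases hABc p with h | h
            · exact h
            · exfalso
              have h1 := hmemB p h
              rw [← haeqb, ← hcoe] at h1
              have h2 : γ ≤ (p : ℝ) := by exact_mod_cast h1
              exact absurd hp (not_lt.mpr h2)
          · intro hp
            have h1 := hmemA p hp
            rw [← hcoe] at h1
            have h2 : (p : ℝ) ≤ γ := by exact_mod_cast h1
            have h3 : (p : ℝ) ≠ γ := fun h => hirr' ⟨p, h⟩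
            exact lt_of_le_of_ne h2 h3
        have setB : {p : ℚ | γ < (p : ℝ)} = B := by
          ext p
          constructor
          · intro hp
            rcases hABc p with h | h
            · exfalso
              have h1 := hmemA p h
              rw [← hcoe] at h1
              have h2 : (p : ℝ) ≤ γ := by exact_mod_cast h1
              exact absurd hp (not_lt.mpr h2)
            · exact h
          · intro hp
            have h1 := hmemB p hp
            rw [← haeqb, ← hcoe] at h1
            have h2 : γ ≤ (p : ℝ) := by exact_mod_cast h1
            have h3 : γ ≠ (p : ℝ) := fun h => hirr' ⟨p, h.symm⟩
            exact lt_of_le_of_ne h2 h3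
        have happ := hcont γ hirr
        rw [setA, setB] at happ
        have hsupy : sSup ((fun p : ℚ => ((g p : ℝ) : EReal)) '' A) ≤ ((y : ℝ) : EReal) := by
          apply sSup_le
          rintro z ⟨p, hp, rfl⟩
          have hp' : g p < y := hp
          show ((g p : ℝ) : EReal) ≤ ((y : ℝ) : EReal)
          exact_mod_cast hp'.le
        have hinfy : ((y : ℝ) : EReal) ≤ sInf ((fun p : ℚ => ((g p : ℝ) : EReal)) '' B) := by
          apply le_sInf
          rintro z ⟨p, hp, rfl⟩
          have hp' : y < g p := hp
          show ((y : ℝ) : EReal) ≤ ((g p : ℝ) : EReal)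
          exact_mod_cast hp'.le
        have heq : sSup ((fun p : ℚ => ((g p : ℝ) : EReal)) '' A) = ((y : ℝ) : EReal) :=
          le_antisymm hsupy (by rw [happ]; exact hinfy)
        have hclos : (y : ℝ) ∈ closure ((Set.range fun q : ℚ => (g q : ℝ)) \ {(y : ℝ)}) := by
          rw [Metric.mem_closure_iff]
          intro ε hε
          have hlt : (((y : ℝ) - ε : ℝ) : EReal) <
              sSup ((fun p : ℚ => ((g p : ℝ) : EReal)) '' A) := by
            rw [heq]
            exact_mod_cast (by linarith : (y : ℝ) - ε < (y : ℝ))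
          obtain ⟨z, ⟨p, hp, rfl⟩, hz⟩ := lt_sSup_iff.mp hlt
          have hz2 : (((y : ℝ) - ε : ℝ) : EReal) < ((g p : ℝ) : EReal) := hz
          have hz' : (y : ℝ) - ε < (g p : ℝ) := by exact_mod_cast hz2
          have hpy' : g p < y := hp
          have hpy : (g p : ℝ) < (y : ℝ) := by exact_mod_cast hpy'
          refine ⟨(g p : ℝ), ⟨⟨p, rfl⟩, fun h => ?_⟩, ?_⟩
          · exact absurd (Set.mem_singleton_iff.mp h) (ne_of_lt hpy)
          · rw [Real.dist_eq, abs_lt]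
            constructor <;> linarith
        exact Rat.not_irrational y (hLP (y : ℝ) hclos)
      obtain ⟨x, hx⟩ := hrat
      refine ⟨x, ?_, ?_⟩
      · rw [← hcoe, hx]
      · rw [← haeqb, ← hcoe, hx]
  refine ⟨key, ?_⟩
  choose d hd1 hd2 using key
  refine ⟨d, ?_, ?_⟩
  · intro y y' hyy'
    have hsub : {p : ℚ | g p < y} ⊆ {p : ℚ | g p < y'} :=
      fun p hp => lt_of_lt_of_le hp hyy'
    have hmono : ((d y : ℝ) : EReal) ≤ ((d y' : ℝ) : EReal) := by
      rw [← hd1 y, ← hd1 y']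
      exact sSup_le_sSup (Set.image_mono hsub)
    exact_mod_cast hmono
  · intro x
    have h2 : sSup ((fun p : ℚ => ((p : ℝ) : EReal)) '' {p : ℚ | g p < g x}) =
        ((x : ℝ) : EReal) := by
      rw [gxset x]; exact sup_coe_lt x
    have h3 := (hd1 (g x)).symm.trans h2
    exact_mod_cast h3
end

section
/- Let g : ℚ → ℚ be a generic injection and let J ⊆ ℚ be an interval whose endpoints q₁ ≤ q₂ lie in ℚ ∪ {±∞}. Then the preimage g⁻¹(J) is again an interval of ℚ whose endpoints are g†(q₁) and g†(q₂) (which are rational when q₁, q₂ are). -/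
/-- Let `g : ℚ → ℚ` be a generic injection with generalized inverse `d` (so `d y`
is the common value of `sup g⁻¹((-∞,y))` and `inf g⁻¹((y,+∞))`), and let `J ⊆ ℚ`
be an interval (order-connected set) with endpoints `q₁ ≤ q₂` in `ℚ`.  Then
`g ⁻¹' J` is again an interval of `ℚ`, and (when nonempty) its endpoints are
`d q₁` and `d q₂`. -/
theorem generic_injection_preimage_interval (g : ℚ → ℚ) (hsm : StrictMono g)
    (hub : ∀ q : ℚ, ∃ x : ℚ, g x < q) (hua : ∀ q : ℚ, ∃ x : ℚ, q < g x)
    (hcont : ∀ γ : ℝ, Irrational γ →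
      sSup ((fun p : ℚ => ((g p : ℝ) : EReal)) '' {p : ℚ | (p : ℝ) < γ}) =
      sInf ((fun p : ℚ => ((g p : ℝ) : EReal)) '' {p : ℚ | γ < (p : ℝ)}))
    (hLP : ∀ γ : ℝ, γ ∈ closure ((Set.range fun q : ℚ => (g q : ℝ)) \ {γ}) →
      Irrational γ)
    (d : ℚ → ℚ)
    (hd : ∀ y : ℚ,
      sSup ((fun p : ℚ => ((p : ℝ) : EReal)) '' {p : ℚ | g p < y}) =
        ((d y : ℝ) : EReal) ∧
      sInf ((fun p : ℚ => ((p : ℝ) : EReal)) '' {p : ℚ | y < g p}) =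
        ((d y : ℝ) : EReal))
    (J : Set ℚ) (hJ : J.OrdConnected) (q₁ q₂ : ℚ) (hq : q₁ ≤ q₂)
    (hinfJ : sInf ((fun p : ℚ => ((p : ℝ) : EReal)) '' J) = ((q₁ : ℝ) : EReal))
    (hsupJ : sSup ((fun p : ℚ => ((p : ℝ) : EReal)) '' J) = ((q₂ : ℝ) : EReal)) :
    (g ⁻¹' J).OrdConnected ∧
    ((g ⁻¹' J).Nonempty →
      sInf ((fun p : ℚ => ((p : ℝ) : EReal)) '' (g ⁻¹' J)) = ((d q₁ : ℝ) : EReal) ∧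
      sSup ((fun p : ℚ => ((p : ℝ) : EReal)) '' (g ⁻¹' J)) = ((d q₂ : ℝ) : EReal)) := by
  have flt : ∀ {a b : ℚ}, ((a : ℝ) : EReal) < ((b : ℝ) : EReal) ↔ a < b := by
    intro a b; exact_mod_cast Iff.rfl
  have fle : ∀ {a b : ℚ}, ((a : ℝ) : EReal) ≤ ((b : ℝ) : EReal) ↔ a ≤ b := by
    intro a b; exact_mod_cast Iff.rfl
  constructor
  · exact ⟨fun x hx z hz y hy => hJ.out hx hz ⟨hsm.monotone hy.1, hsm.monotone hy.2⟩⟩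
  rintro ⟨x₀, hx₀⟩
  have hmemle : ∀ x ∈ g ⁻¹' J, q₁ ≤ g x ∧ g x ≤ q₂ := by
    intro x hx
    constructor
    · exact fle.1 (hinfJ ▸ sInf_le ⟨g x, hx, rfl⟩)
    · exact fle.1 (hsupJ ▸ le_sSup ⟨g x, hx, rfl⟩)
  constructor
  · apply le_antisymm
    · apply le_of_forall_gt_imp_ge_of_dense
      intro b hb
      rw [← (hd q₁).2] at hb
      obtain ⟨y, ⟨p, hp, rfl⟩, hyb⟩ := sInf_lt_iff.1 hb
      by_cases hgp : g p ∈ J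
      · exact le_trans (sInf_le ⟨p, hgp, rfl⟩) hyb.le
      by_cases hcase : ∃ a ∈ J, g p ≤ a
      · obtain ⟨a, ha, hpa⟩ := hcase
        have h1 : sInf ((fun p : ℚ => ((p : ℝ) : EReal)) '' J) < ((g p : ℝ) : EReal) := by
          rw [hinfJ]; exact flt.2 hp
        obtain ⟨y, ⟨c, hc, rfl⟩, hcg⟩ := sInf_lt_iff.1 h1
        exact absurd (hJ.out hc ha ⟨(flt.1 hcg).le, hpa⟩) hgp
      · push_neg at hcase
        have hx₀p : x₀ ≤ p := (hsm.lt_iff_lt.1 (hcase _ hx₀)).le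
        exact le_trans (sInf_le ⟨x₀, hx₀, rfl⟩) (le_trans (fle.2 hx₀p) hyb.le)
    · apply le_sInf
      rintro y ⟨x, hx, rfl⟩
      rw [← (hd q₁).1]
      apply sSup_le
      rintro y ⟨p, hp, rfl⟩
      exact fle.2 (hsm.lt_iff_lt.1 (lt_of_lt_of_le hp (hmemle x hx).1)).le
  · apply le_antisymm
    · apply sSup_le
      rintro y ⟨x, hx, rfl⟩
      rw [← (hd q₂).2]
      apply le_sInf
      rintro y ⟨p, hp, rfl⟩
      exact fle.2 (hsm.lt_iff_lt.1 (lt_of_le_of_lt (hmemle x hx).2 hp)).le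
    · apply le_of_forall_lt_imp_le_of_dense
      intro b hb
      rw [← (hd q₂).1] at hb
      obtain ⟨y, ⟨p, hp, rfl⟩, hyb⟩ := lt_sSup_iff.1 hb
      by_cases hgp : g p ∈ J
      · exact le_trans hyb.le (le_sSup ⟨p, hgp, rfl⟩)
      by_cases hcase : ∃ a ∈ J, a ≤ g p
      · obtain ⟨a, ha, hpa⟩ := hcase
        have h1 : ((g p : ℝ) : EReal) < sSup ((fun p : ℚ => ((p : ℝ) : EReal)) '' J) := by
          rw [hsupJ]; exact flt.2 hp
        obtain ⟨y, ⟨c, hc, rfl⟩, hcg⟩ := lt_sSup_iff.1 h1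
        exact absurd (hJ.out ha hc ⟨hpa, (flt.1 hcg).le⟩) hgp
      · push_neg at hcase
        have hx₀p : p ≤ x₀ := (hsm.lt_iff_lt.1 (hcase _ hx₀)).le
        exact le_trans (le_trans hyb.le (fle.2 hx₀p)) (le_sSup ⟨x₀, hx₀, rfl⟩)
end

section
/- Let s, f : ℚ → ℚ be monotone with Img(s) ⊆ Img(f). Then every finite partial monotone map m₀ from ℚ to ℚ satisfying s(p) = f(m₀(p)) for all p in its domain extends to a total monotone map s' : ℚ → ℚ with s = f ∘ s'. -/
/-- If `s, f : ℚ → ℚ` are monotone with `range s ⊆ range f`, then every finite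
partial monotone map `m₀` (defined on a finite set `D`) satisfying
`s p = f (m₀ p)` on `D` extends to a total monotone `s' : ℚ → ℚ` with
`s = f ∘ s'`. -/
theorem extend_partial_solution_monotone (s f : ℚ → ℚ) (hs : Monotone s)
    (hf : Monotone f) (him : Set.range s ⊆ Set.range f)
    (D : Finset ℚ) (m₀ : ℚ → ℚ)
    (hm₀ : ∀ p ∈ D, ∀ q ∈ D, p ≤ q → m₀ p ≤ m₀ q)
    (hcomp : ∀ p ∈ D, s p = f (m₀ p)) :
    ∃ s' : ℚ → ℚ, Monotone s' ∧ (∀ p ∈ D, s' p = m₀ p) ∧ s = f ∘ s' := by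
  classical
  set c : ℚ → ℚ := fun v => if h : ∃ y, f y = v then h.choose else 0 with hc
  have hcspec : ∀ p : ℚ, f (c (s p)) = s p := by
    intro p
    have h : ∃ y, f y = s p := him ⟨p, rfl⟩
    simp only [hc, dif_pos h]
    exact h.choose_spec
  set A : ℚ → Finset ℚ := fun p => D.filter (fun d => d ≤ p ∧ s d = s p) with hA
  set B : ℚ → Finset ℚ := fun p => D.filter (fun d => s d = s p) with hB
  have memA : ∀ {p d : ℚ}, d ∈ A p ↔ d ∈ D ∧ d ≤ p ∧ s d = s p := by
    intro p d; simp [hA, Finset.mem_filter]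
  have memB : ∀ {p d : ℚ}, d ∈ B p ↔ d ∈ D ∧ s d = s p := by
    intro p d; simp [hB, Finset.mem_filter]
  set s' : ℚ → ℚ := fun p =>
    if h : (A p).Nonempty then m₀ ((A p).max' h)
    else if h2 : (B p).Nonempty then m₀ ((B p).min' h2)
    else c (s p) with hs'
  have hfval : ∀ p, f (s' p) = s p := by
    intro p
    simp only [hs']
    split_ifs with h1 h2
    · have hm := memA.mp ((A p).max'_mem h1)
      rw [← hcomp _ hm.1, hm.2.2]
    · have hm := memB.mp ((B p).min'_mem h2)
      rw [← hcomp _ hm.1, hm.2]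
    · exact hcspec p
  have hmono : Monotone s' := by
    intro p q hpq
    rcases lt_or_eq_of_le (hs hpq) with hlt | heq
    · by_contra hcon
      push_neg at hcon
      have := hf hcon.le
      rw [hfval, hfval] at this
      exact absurd this (not_le.mpr hlt)
    · have hBeq : B p = B q := by
        simp only [hB, heq]
      have hAsub : A p ⊆ A q := by
        intro d hd
        have hd' := memA.mp hd
        exact memA.mpr ⟨hd'.1, hd'.2.1.trans hpq, hd'.2.2.trans heq⟩
      have hAqB : A q ⊆ B q := by
        intro d hd
        have hd' := memA.mp hd
        exact memB.mpr ⟨hd'.1, hd'.2.2⟩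
      simp only [hs']
      by_cases h1 : (A p).Nonempty
      · have h1' : (A q).Nonempty := h1.mono hAsub
        rw [dif_pos h1, dif_pos h1']
        have hm1 := memA.mp ((A p).max'_mem h1)
        have hm2 := memA.mp ((A q).max'_mem h1')
        exact hm₀ _ hm1.1 _ hm2.1 (Finset.le_max' _ _ (hAsub ((A p).max'_mem h1)))
      · rw [dif_neg h1]
        by_cases h2 : (B p).Nonempty
        · rw [dif_pos h2]
          by_cases h3 : (A q).Nonempty
          · rw [dif_pos h3]
            have hmB : (A q).max' h3 ∈ B p := hBeq ▸ hAqB ((A q).max'_mem h3)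
            have hm1 := memB.mp ((B p).min'_mem h2)
            have hm2 := memB.mp hmB
            exact hm₀ _ hm1.1 _ hm2.1 (Finset.min'_le _ _ hmB)
          · rw [dif_neg h3]
            have h2' : (B q).Nonempty := hBeq ▸ h2
            rw [dif_pos h2']
            have hmin : (B p).min' h2 = (B q).min' h2' := by
              congr 1
            exact le_of_eq (congrArg m₀ hmin)
        · rw [dif_neg h2]
          have h2' : ¬ (B q).Nonempty := hBeq ▸ h2
          have h3 : ¬ (A q).Nonempty := fun h => h2' (h.mono hAqB)
          rw [dif_neg h3, dif_neg h2', heq]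
  refine ⟨s', hmono, ?_, ?_⟩
  · intro p hp
    have hpA : p ∈ A p := memA.mpr ⟨hp, le_refl p, rfl⟩
    have h1 : (A p).Nonempty := ⟨p, hpA⟩
    simp only [hs', dif_pos h1]
    have hmax : (A p).max' h1 = p :=
      le_antisymm ((memA.mp ((A p).max'_mem h1)).2.1) (Finset.le_max' _ _ hpA)
    rw [hmax]
  · funext p
    exact (hfval p).symm
end

section
/- Let s, f : ℚ → ℚ be monotone with Img(s) ⊆ Img(f), and suppose that for each w ∈ Img(f) the preimage f⁻¹({w}) is an interval of ℚ with irrational endpoints. Then every finite partial strictly monotone map m₀ satisfying s(p) = f(m₀(p)) for all p in its domain extends to a strictly monotone (injective monotone) s' : ℚ → ℚ with s = f ∘ s'. -/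
lemma psi_lt_psi {x y : ℚ} (hx : 0 ≤ x) (hxy : x < y) :
    x / (1 + x) < y / (1 + y) := by
  have h1 : (0:ℚ) < 1 + x := by linarith
  have h2 : (0:ℚ) < 1 + y := by linarith
  rw [div_lt_div_iff₀ h1 h2]; nlinarith

lemma psi_nonneg {x : ℚ} (hx : 0 ≤ x) : 0 ≤ x / (1 + x) := by positivity

lemma psi_pos {x : ℚ} (hx : 0 < x) : 0 < x / (1 + x) := by positivity

lemma psi_lt_one {x : ℚ} (hx : 0 ≤ x) : x / (1 + x) < 1 := by
  rw [div_lt_one (by linarith)]; linarith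

lemma ecoe_lt_ecoe {x y : ℚ} (h : x < y) : ((x:ℝ):EReal) < ((y:ℝ):EReal) := by
  exact_mod_cast h

lemma ecoe_lt_down {x y : ℚ} (h : ((x:ℝ):EReal) < ((y:ℝ):EReal)) : x < y := by
  exact_mod_cast h

/-- Fill one fibre: a strictly monotone map of `ℚ` into the rational interval
`(r,t)` matching prescribed increasing values on a finite set. -/
lemma fill_fiber (r : EReal)
    (H1 : ∀ x : ℚ, r < ((x:ℝ):EReal) → ∃ y : ℚ, r < ((y:ℝ):EReal) ∧ y < x) :
    ∀ (n : ℕ) (t : EReal) (E : Finset ℚ) (v : ℚ → ℚ), E.card = n →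
    (∀ x : ℚ, ((x:ℝ):EReal) < t → ∃ y : ℚ, ((y:ℝ):EReal) < t ∧ x < y) →
    (∀ p ∈ E, r < ((v p:ℝ):EReal) ∧ ((v p:ℝ):EReal) < t) →
    (∃ q : ℚ, r < ((q:ℝ):EReal) ∧ ((q:ℝ):EReal) < t) →
    (∀ p ∈ E, ∀ q ∈ E, p < q → v p < v q) →
    ∃ h : ℚ → ℚ, StrictMono h ∧
      (∀ q, r < ((h q:ℝ):EReal) ∧ ((h q:ℝ):EReal) < t) ∧ ∀ p ∈ E, h p = v p := by
  intro n
  induction n with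
  | zero =>
    intro t E v hcard H2 hv hne hmono
    obtain ⟨q₀, hq₀r, hq₀t⟩ := hne
    obtain ⟨a, har, haq⟩ := H1 q₀ hq₀r
    obtain ⟨b, hbt, hqb⟩ := H2 q₀ hq₀t
    have hE : E = ∅ := Finset.card_eq_zero.mp hcard
    refine ⟨fun q => if q < 0 then q₀ - (q₀ - a) * ((-q) / (1 + -q))
        else q₀ + (b - q₀) * (q / (1 + q)), ?_, ?_, ?_⟩
    · intro q1 q2 hlt
      dsimp only
      by_cases h1 : q1 < 0
      · by_cases h2 : q2 < 0
        · rw [if_pos h1, if_pos h2]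
          have := psi_lt_psi (x := -q2) (y := -q1) (by linarith) (by linarith)
          nlinarith
        · rw [if_pos h1, if_neg h2]
          have hl : 0 < (-q1) / (1 + -q1) := psi_pos (by linarith)
          have hr2 : 0 ≤ q2 / (1 + q2) := psi_nonneg (by linarith)
          nlinarith
      · have h2 : ¬ q2 < 0 := by intro h2; exact h1 (hlt.trans h2)
        rw [if_neg h1, if_neg h2]
        have := psi_lt_psi (x := q1) (y := q2) (by linarith) hlt
        nlinarith
    · intro q
      dsimp only
      by_cases h1 : q < 0
      · rw [if_pos h1]
        have hlt1 : (-q) / (1 + -q) < 1 := psi_lt_one (by linarith)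
        have hgt0 : 0 < (-q) / (1 + -q) := psi_pos (by linarith)
        constructor
        · exact lt_trans har (ecoe_lt_ecoe (by nlinarith))
        · exact lt_trans (ecoe_lt_ecoe (by nlinarith)) hq₀t
      · rw [if_neg h1]
        have hlt1 : q / (1 + q) < 1 := psi_lt_one (by linarith)
        have hge0 : 0 ≤ q / (1 + q) := psi_nonneg (by linarith)
        constructor
        · refine lt_of_lt_of_le hq₀r ?_
          have : q₀ ≤ q₀ + (b - q₀) * (q / (1 + q)) := by nlinarith
          exact_mod_cast this
        · exact lt_trans (ecoe_lt_ecoe (by nlinarith)) hbt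
    · intro p hp; rw [hE] at hp; exact absurd hp (Finset.notMem_empty p)
  | succ n ih =>
    intro t E v hcard H2 hv hne hmono
    have hEne : E.Nonempty := Finset.card_pos.mp (by omega)
    set P := E.max' hEne with hP
    have hPmem : P ∈ E := E.max'_mem hEne
    have hvP := hv P hPmem
    -- inductive call on E.erase P with upper bound v P
    have hcard' : (E.erase P).card = n := by
      rw [Finset.card_erase_of_mem hPmem, hcard]; omega
    have H2' : ∀ x : ℚ, ((x:ℝ):EReal) < ((v P:ℝ):EReal) →
        ∃ y : ℚ, ((y:ℝ):EReal) < ((v P:ℝ):EReal) ∧ x < y := by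
      intro x hx
      have hx' : x < v P := ecoe_lt_down hx
      exact ⟨(x + v P) / 2, ecoe_lt_ecoe (by linarith), by linarith⟩
    have hlt' : ∀ p ∈ E.erase P, v p < v P := by
      intro p hp
      have hpE := Finset.mem_of_mem_erase hp
      have hne' := Finset.ne_of_mem_erase hp
      exact hmono p hpE P hPmem (lt_of_le_of_ne (E.le_max' p hpE) hne')
    have hv' : ∀ p ∈ E.erase P,
        r < ((v p:ℝ):EReal) ∧ ((v p:ℝ):EReal) < ((v P:ℝ):EReal) := by
      intro p hp
      exact ⟨(hv p (Finset.mem_of_mem_erase hp)).1, ecoe_lt_ecoe (hlt' p hp)⟩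
    have hne' : ∃ q : ℚ, r < ((q:ℝ):EReal) ∧ ((q:ℝ):EReal) < ((v P:ℝ):EReal) := by
      obtain ⟨y, hyr, hyP⟩ := H1 (v P) hvP.1
      exact ⟨y, hyr, ecoe_lt_ecoe hyP⟩
    obtain ⟨h₁, h₁mono, h₁bd, h₁eq⟩ := ih ((v P:ℝ):EReal) (E.erase P) v hcard' H2' hv' hne'
      (fun p hp q hq => hmono p (Finset.mem_of_mem_erase hp) q (Finset.mem_of_mem_erase hq))
    obtain ⟨d, hdt, hPd⟩ := H2 (v P) hvP.2
    refine ⟨fun q => if q < P then h₁ q else v P + (d - v P) * ((q - P) / (1 + (q - P))),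
      ?_, ?_, ?_⟩
    · intro q1 q2 hlt
      dsimp only
      by_cases h1 : q1 < P
      · by_cases h2 : q2 < P
        · rw [if_pos h1, if_pos h2]; exact h₁mono hlt
        · rw [if_pos h1, if_neg h2]
          have hb := ecoe_lt_down (h₁bd q1).2
          have hge : 0 ≤ (q2 - P) / (1 + (q2 - P)) := psi_nonneg (by linarith)
          nlinarith
      · have h2 : ¬ q2 < P := by intro h2; exact h1 (hlt.trans h2)
        rw [if_neg h1, if_neg h2]
        have := psi_lt_psi (x := q1 - P) (y := q2 - P) (by linarith) (by linarith)
        nlinarith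
    · intro q
      dsimp only
      by_cases h1 : q < P
      · rw [if_pos h1]
        exact ⟨(h₁bd q).1, lt_trans (h₁bd q).2 hvP.2⟩
      · rw [if_neg h1]
        have hlt1 : (q - P) / (1 + (q - P)) < 1 := psi_lt_one (by linarith)
        have hge0 : 0 ≤ (q - P) / (1 + (q - P)) := psi_nonneg (by linarith)
        constructor
        · refine lt_of_lt_of_le hvP.1 ?_
          have : v P ≤ v P + (d - v P) * ((q - P) / (1 + (q - P))) := by nlinarith
          exact_mod_cast this
        · exact lt_trans (ecoe_lt_ecoe (by nlinarith)) hdt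
    · intro p hp
      dsimp only
      by_cases h1 : p < P
      · rw [if_pos h1]; exact h₁eq p (Finset.mem_erase.mpr ⟨ne_of_lt h1, hp⟩)
      · have : p = P := le_antisymm (E.le_max' p hp) (not_lt.mp h1)
        rw [if_neg h1, this]
        norm_num


/-- If `s, f : ℚ → ℚ` are monotone with `range s ⊆ range f` and every fibre of `f`
over its range is an interval of `ℚ` with irrational (or infinite) endpoints,
then every finite partial strictly monotone map `m₀` satisfying `s p = f (m₀ p)`
on its domain extends to a strictly monotone `s' : ℚ → ℚ` with `s = f ∘ s'`. -/
theorem extend_partial_solution_strictMono (s f : ℚ → ℚ) (hs : Monotone s)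
    (hf : Monotone f) (him : Set.range s ⊆ Set.range f)
    (hfib : ∀ w ∈ Set.range f, ∃ r t : EReal,
      (r = ⊥ ∨ ∃ ρ : ℝ, Irrational ρ ∧ r = (ρ : EReal)) ∧
      (t = ⊤ ∨ ∃ τ : ℝ, Irrational τ ∧ t = (τ : EReal)) ∧
      (∀ q : ℚ, f q = w ↔ (r < ((q : ℝ) : EReal) ∧ ((q : ℝ) : EReal) < t)))
    (D : Finset ℚ) (m₀ : ℚ → ℚ)
    (hm₀ : ∀ p ∈ D, ∀ q ∈ D, p < q → m₀ p < m₀ q)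
    (hcomp : ∀ p ∈ D, s p = f (m₀ p)) :
    ∃ s' : ℚ → ℚ, StrictMono s' ∧ (∀ p ∈ D, s' p = m₀ p) ∧ s = f ∘ s' := by
  classical
  have key : ∀ w ∈ Set.range s, ∃ h : ℚ → ℚ, StrictMono h ∧
      (∀ p ∈ D, s p = w → h p = m₀ p) ∧ (∀ q, f (h q) = w) := by
    intro w hw
    have hwf : w ∈ Set.range f := him hw
    obtain ⟨r, t, hr, ht, hiff⟩ := hfib w hwf
    have H1 : ∀ x : ℚ, r < ((x:ℝ):EReal) → ∃ y : ℚ, r < ((y:ℝ):EReal) ∧ y < x := by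
      intro x hx
      rcases hr with hrb | ⟨ρ, _, hrρ⟩
      · exact ⟨x - 1, hrb ▸ EReal.bot_lt_coe _, by linarith⟩
      · rw [hrρ] at hx ⊢
        have hx' : ρ < (x:ℝ) := by exact_mod_cast hx
        obtain ⟨y, hy1, hy2⟩ := exists_rat_btwn hx'
        exact ⟨y, by exact_mod_cast hy1, by exact_mod_cast hy2⟩
    have H2 : ∀ x : ℚ, ((x:ℝ):EReal) < t → ∃ y : ℚ, ((y:ℝ):EReal) < t ∧ x < y := by
      intro x hx
      rcases ht with htb | ⟨τ, _, htτ⟩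
      · exact ⟨x + 1, htb ▸ EReal.coe_lt_top _, by linarith⟩
      · rw [htτ] at hx ⊢
        have hx' : (x:ℝ) < τ := by exact_mod_cast hx
        obtain ⟨y, hy1, hy2⟩ := exists_rat_btwn hx'
        exact ⟨y, by exact_mod_cast hy2, by exact_mod_cast hy1⟩
    set E : Finset ℚ := D.filter (fun p => s p = w) with hE
    have hv : ∀ p ∈ E, r < ((m₀ p:ℝ):EReal) ∧ ((m₀ p:ℝ):EReal) < t := by
      intro p hp
      rw [hE, Finset.mem_filter] at hp
      exact (hiff (m₀ p)).mp (by rw [← hcomp p hp.1, hp.2])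
    have hne : ∃ q : ℚ, r < ((q:ℝ):EReal) ∧ ((q:ℝ):EReal) < t := by
      obtain ⟨q₁, hq₁⟩ := hwf
      exact ⟨q₁, (hiff q₁).mp hq₁⟩
    have hmono' : ∀ p ∈ E, ∀ q ∈ E, p < q → m₀ p < m₀ q := by
      intro p hp q hq hpq
      rw [hE, Finset.mem_filter] at hp hq
      exact hm₀ p hp.1 q hq.1 hpq
    obtain ⟨h, hhm, hhbd, hheq⟩ := fill_fiber r H1 E.card t E m₀ rfl H2 hv hne hmono'
    refine ⟨h, hhm, ?_, fun q => (hiff (h q)).mpr (hhbd q)⟩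
    intro p hp hsp
    exact hheq p (by rw [hE, Finset.mem_filter]; exact ⟨hp, hsp⟩)
  set F : ℚ → (ℚ → ℚ) := fun w =>
    if hw : w ∈ Set.range s then (key w hw).choose else id with hFdef
  have hF : ∀ w (hw : w ∈ Set.range s), StrictMono (F w) ∧
      (∀ p ∈ D, s p = w → F w p = m₀ p) ∧ (∀ q, f (F w q) = w) := by
    intro w hw
    simp only [hFdef, dif_pos hw]
    exact (key w hw).choose_spec
  refine ⟨fun q => F (s q) q, ?_, ?_, ?_⟩
  · intro p q hpq
    dsimp only
    rcases lt_or_eq_of_le (hs hpq.le) with hlt | heq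
    · have h1 : f (F (s p) p) = s p := (hF (s p) ⟨p, rfl⟩).2.2 p
      have h2 : f (F (s q) q) = s q := (hF (s q) ⟨q, rfl⟩).2.2 q
      by_contra hle
      push_neg at hle
      have := hf hle
      rw [h1, h2] at this
      exact absurd hlt (not_lt.mpr this)
    · rw [← heq]
      exact (hF (s p) ⟨p, rfl⟩).1 hpq
  · intro p hp
    exact (hF (s p) ⟨p, rfl⟩).2.1 p hp rfl
  · funext q
    exact ((hF (s q) ⟨q, rfl⟩).2.2 q).symm
end

section
/- Let X, Y be countably infinite structures in a common language, A ⊆ X and C ⊆ Y. Suppose S is a set of finite partial homomorphisms from X to Y that is closed under restriction, has the forth property, and has the (A,C)-back property: for every m ∈ S and every y ∈ C there exists m' ∈ S extending m with some x ∈ A ∩ dom(m') satisfying m'(x) = y. Then every m ∈ S extends to a total homomorphism s : X → Y such that every y ∈ C has an s-preimage in A. -/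
/-- `(A,C)`-Back&Forth systems on `(ℚ, ≤)`: if a set `S` of finite partial
monotone maps (represented by their graphs) is closed under restriction, has the
forth property, and has the `(A,C)`-back property, then every member of `S`
extends to a total monotone map `s` such that every `y ∈ C` has an `s`-preimage
in `A`. -/
theorem AC_back_and_forth_extension (A C : Set ℚ) (S : Set (Finset (ℚ × ℚ)))
    (hmono : ∀ G ∈ S, ∀ p ∈ G, ∀ q ∈ G,
      Prod.fst p ≤ Prod.fst q → Prod.snd p ≤ Prod.snd q)
    (hres : ∀ G ∈ S, ∀ G' : Finset (ℚ × ℚ), G' ⊆ G → G' ∈ S)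
    (hforth : ∀ G ∈ S, ∀ x : ℚ, (∀ p ∈ G, Prod.fst p ≠ x) →
      ∃ G' ∈ S, G ⊆ G' ∧ ∃ y : ℚ, (x, y) ∈ G')
    (hback : ∀ G ∈ S, ∀ y ∈ C, ∃ G' ∈ S, G ⊆ G' ∧ ∃ x ∈ A, (x, y) ∈ G') :
    ∀ G ∈ S, ∃ s : ℚ → ℚ, Monotone s ∧
      (∀ p ∈ G, s (Prod.fst p) = Prod.snd p) ∧
      ∀ y ∈ C, ∃ x ∈ A, s x = y := by
  intro G hG
  -- enumeration of ℚ
  obtain ⟨e, he⟩ : ∃ e : ℕ → ℚ, Function.Surjective e :=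
    ⟨(Denumerable.eqv ℚ).symm, (Denumerable.eqv ℚ).symm.surjective⟩
  -- one step: handle back for q (if q ∈ C) and forth for q
  have step : ∀ H, H ∈ S → ∀ q : ℚ, ∃ H', H' ∈ S ∧ H ⊆ H' ∧
      (∃ y, (q, y) ∈ H') ∧ (q ∈ C → ∃ x ∈ A, (x, q) ∈ H') := by
    intro H hH q
    obtain ⟨H1, hH1, hs1, hb1⟩ : ∃ H1, H1 ∈ S ∧ H ⊆ H1 ∧
        (q ∈ C → ∃ x ∈ A, (x, q) ∈ H1) := by
      by_cases hq : q ∈ C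
      · obtain ⟨H1, h1, hs, x, hx, hxq⟩ := hback H hH q hq
        exact ⟨H1, h1, hs, fun _ => ⟨x, hx, hxq⟩⟩
      · exact ⟨H, hH, subset_rfl, fun h => absurd h hq⟩
    by_cases hd : ∃ p ∈ H1, Prod.fst p = q
    · obtain ⟨p, hp, hpq⟩ := hd
      refine ⟨H1, hH1, hs1, ⟨p.2, ?_⟩, hb1⟩
      have : (p.1, p.2) ∈ H1 := by simpa using hp
      rwa [hpq] at this
    · push_neg at hd
      obtain ⟨H2, hH2, hs2, y, hy⟩ := hforth H1 hH1 q hd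
      exact ⟨H2, hH2, fun a ha => hs2 (hs1 ha), ⟨y, hy⟩,
        fun hq => (hb1 hq).imp fun x ⟨hx, hxq⟩ => ⟨hx, hs2 hxq⟩⟩
  choose f hfS hfsub hfy hfC using step
  -- chain
  let F : ℕ → {H : Finset (ℚ × ℚ) // H ∈ S} := fun n =>
    Nat.rec ⟨G, hG⟩ (fun n H => ⟨f H.1 H.2 (e n), hfS H.1 H.2 (e n)⟩) n
  have hFsucc : ∀ n, (F (n + 1)).1 = f (F n).1 (F n).2 (e n) := fun n => rfl
  have hchain : ∀ m n, m ≤ n → (F m).1 ⊆ (F n).1 := by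
    intro m n hmn
    induction n with
    | zero => simp_all
    | succ n ih =>
      rcases Nat.lt_or_ge m (n + 1) with h | h
      · exact fun a ha => by
          rw [hFsucc n]
          exact hfsub (F n).1 (F n).2 (e n) (ih (Nat.lt_succ_iff.mp h) ha)
      · have : m = n + 1 := le_antisymm hmn h
        subst this; exact subset_rfl
  -- uniqueness of images
  have huniq : ∀ x y1 y2 m n, (x, y1) ∈ (F m).1 → (x, y2) ∈ (F n).1 → y1 = y2 := by
    intro x y1 y2 m n h1 h2
    have h1' : (x, y1) ∈ (F (max m n)).1 := hchain m _ (le_max_left m n) h1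
    have h2' : (x, y2) ∈ (F (max m n)).1 := hchain n _ (le_max_right m n) h2
    exact le_antisymm
      (hmono _ (F (max m n)).2 _ h1' _ h2' le_rfl)
      (hmono _ (F (max m n)).2 _ h2' _ h1' le_rfl)
  -- totality
  have htot : ∀ x : ℚ, ∃ y, ∃ n, (x, y) ∈ (F n).1 := by
    intro x
    obtain ⟨n, rfl⟩ := he x
    obtain ⟨y, hy⟩ := hfy (F n).1 (F n).2 (e n)
    exact ⟨y, n + 1, by rw [hFsucc]; exact hy⟩
  choose s hs using htot
  choose ns hns using hs
  refine ⟨s, ?_, ?_, ?_⟩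
  · intro x x' hxx'
    set N := max (ns x) (ns x')
    have h1 : (x, s x) ∈ (F N).1 := hchain _ _ (le_max_left _ _) (hns x)
    have h2 : (x', s x') ∈ (F N).1 := hchain _ _ (le_max_right _ _) (hns x')
    exact hmono _ (F N).2 _ h1 _ h2 hxx'
  · intro p hp
    have hp' : (p.1, p.2) ∈ (F 0).1 := by exact hp
    exact huniq p.1 (s p.1) p.2 _ 0 (hns p.1) hp'
  · intro y hy
    obtain ⟨n, rfl⟩ := he y
    obtain ⟨x, hx, hxy⟩ := hfC (F n).1 (F n).2 (e n) hy
    have : (x, e n) ∈ (F (n + 1)).1 := by rw [hFsucc]; exact hxy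
    exact ⟨x, hx, huniq x (s x) (e n) _ (n + 1) (hns x) this⟩
end

section
/- Let S be a monoid with a topology 𝒯, D ⊆ S with a topology 𝒯_D, and suppose (S,𝒯) has Pseudo-Property X̄ of length m with respect to (D,𝒯_D). Let (H,∘,𝒪) be a topological monoid (semigroup with continuous multiplication) and φ : S → H a surjective monoid homomorphism whose restriction φ|_D : (D,𝒯_D) → (H,𝒪) is continuous. Then φ : (S,𝒯) → (H,𝒪) is continuous. -/
/-- The alternating product `h (n) * a (n-1) * h (n-1) * ⋯ * a 0 * h 0`. -/
def chainProd {S : Type*} [Monoid S] (h a : ℕ → S) : ℕ → S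
  | 0 => h 0
  | n + 1 => h (n + 1) * a n * chainProd h a n

lemma chainProd_map {S H : Type*} [Monoid S] [Monoid H] (φ : S →* H) (h a : ℕ → S) (n : ℕ) :
    φ (chainProd h a n) = chainProd (fun i => φ (h i)) (fun i => φ (a i)) n := by
  induction n with
  | zero => rfl
  | succ n ih => simp [chainProd, ih]

lemma chain_nbhd {H : Type*} [Monoid H] [TopologicalSpace H] [ContinuousMul H]
    {D : Type*} [TopologicalSpace D] (ψ : D → H) (hψ : Continuous ψ)
    (c : ℕ → H) (a : ℕ → D) (n : ℕ) (W : Set H) (hW : IsOpen W)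
    (hmem : chainProd c (fun i => ψ (a i)) n ∈ W) :
    ∃ V : ℕ → Set D, (∀ i < n, IsOpen (V i) ∧ a i ∈ V i) ∧
      ∀ v : ℕ → D, (∀ i < n, v i ∈ V i) →
        chainProd c (fun i => ψ (v i)) n ∈ W := by
  induction n generalizing W with
  | zero =>
    exact ⟨fun _ => Set.univ, fun i hi => absurd hi (Nat.not_lt_zero i),
      fun v _ => hmem⟩
  | succ n ih =>
    have hg : Continuous fun q : H × H => c (n + 1) * q.1 * q.2 :=
      ((continuous_const.mul continuous_fst).mul continuous_snd)
    have hopen : IsOpen ((fun q : H × H => c (n + 1) * q.1 * q.2) ⁻¹' W) :=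
      hg.isOpen_preimage W hW
    have hpt : (ψ (a n), chainProd c (fun i => ψ (a i)) n) ∈
        (fun q : H × H => c (n + 1) * q.1 * q.2) ⁻¹' W := hmem
    obtain ⟨W1, W2, hW1, hW2, hm1, hm2, hsub⟩ :=
      isOpen_prod_iff.1 hopen _ _ hpt
    obtain ⟨V', hV', hV'prop⟩ := ih W2 hW2 hm2
    refine ⟨fun i => if i = n then ψ ⁻¹' W1 else V' i, ?_, ?_⟩
    · intro i hi
      by_cases h : i = n
      · subst h; simp [hψ.isOpen_preimage W1 hW1, hm1]
      · simpa [h] using hV' i (lt_of_le_of_ne (Nat.le_of_lt_succ hi) h)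
    · intro v hv
      have hvn : ψ (v n) ∈ W1 := by simpa using hv n (Nat.lt_succ_self n)
      have hvtail : chainProd c (fun i => ψ (v i)) n ∈ W2 := by
        apply hV'prop
        intro i hi
        have := hv i (Nat.lt_succ_of_lt hi)
        simpa [Nat.ne_of_lt hi] using this
      exact hsub (Set.mk_mem_prod hvn hvtail)

/-- Pseudo-Property X̄ lifting of continuity: if `(S, 𝒯)` has Pseudo-Property X̄ of
length `m` with respect to `(D, 𝒯_D)`, `(H, 𝒪)` is a topological monoid, and
`φ : S →* H` is a surjective monoid homomorphism whose restriction to `D` is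
continuous, then `φ` is continuous on all of `S`. -/
theorem pseudo_property_X_lifts_continuity {S H : Type*} [Monoid S] [Monoid H]
    (TS : TopologicalSpace S) (D : Set S) (TD : TopologicalSpace D)
    (TH : TopologicalSpace H) (hHmul : @ContinuousMul H TH _)
    (m : ℕ)
    (hX : ∀ s : S, ∃ (e : S) (hh : ℕ → S) (a : ℕ → D),
      (∃ p : S, p * e = 1) ∧
      e * s = chainProd hh (fun i => (a i : S)) m ∧
      ∀ V : ℕ → Set D, (∀ i < m, @IsOpen D TD (V i) ∧ a i ∈ V i) →
        ∃ U : Set S, @IsOpen S TS U ∧ s ∈ U ∧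
          ∀ u ∈ U, ∃ v : ℕ → D, (∀ i < m, v i ∈ V i) ∧
            e * u = chainProd hh (fun i => (v i : S)) m)
    (φ : S →* H) (hφsurj : Function.Surjective φ)
    (hφD : @Continuous D H TD TH (fun d => φ (d : S))) :
    @Continuous S H TS TH φ := by
  rw [continuous_iff_continuousAt]
  intro s
  rw [ContinuousAt, tendsto_nhds]
  intro W hWopen hWs
  rw [mem_nhds_iff]
  obtain ⟨e, hh, a, ⟨p, hpe⟩, heq, hcond⟩ := hX s
  set W₀ : Set H := (fun x => φ p * x) ⁻¹' W with hW₀def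
  have hW₀open : IsOpen W₀ := (continuous_mul_left (φ p)).isOpen_preimage W hWopen
  have key : ∀ u : S, φ p * φ (e * u) = φ u := by
    intro u
    have : φ p * φ (e * u) = φ (p * e * u) := by rw [mul_assoc]; simp [map_mul]
    rw [this, hpe, one_mul]
  have hmem : chainProd (fun i => φ (hh i)) (fun i => φ ((a i : S))) m ∈ W₀ := by
    rw [← chainProd_map φ hh (fun i => (a i : S)) m, ← heq]
    show φ p * φ (e * s) ∈ W
    rw [key]; exact hWs
  obtain ⟨V, hV, hVprop⟩ := chain_nbhd (fun d : D => φ (d : S)) hφD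
    (fun i => φ (hh i)) a m W₀ hW₀open hmem
  obtain ⟨U, hUopen, hsU, hU⟩ := hcond V hV
  refine ⟨U, ?_, hUopen, hsU⟩
  intro u hu
  obtain ⟨v, hv, hveq⟩ := hU u hu
  have : chainProd (fun i => φ (hh i)) (fun i => φ ((v i : S))) m ∈ W₀ :=
    hVprop v hv
  rw [← chainProd_map φ hh (fun i => (v i : S)) m, ← hveq] at this
  have : φ p * φ (e * u) ∈ W := this
  rwa [key] at this
end

section
/- Let g : ℚ → ℚ be a generic injection and let b : ℚ → ℚ be an order automorphism with extension b̄ : ℝ → ℝ. Then the composition b ∘ g is continuous at every irrational point, in the sense that for every irrational γ, sup (b∘g)((-∞,γ)∩ℚ) = inf (b∘g)((γ,+∞)∩ℚ). Consequently, the set of irrational discontinuity points of h ∘ b ∘ g, for any strictly monotone h : ℚ → ℚ, equals ḡ⁻¹( b̄⁻¹(Dc^ℚ-irr(h)) ∩ Img(ḡ) ) ∩ (ℝ∖ℚ), where ḡ, b̄ denote the canonical monotone extensions to ℝ and Dc^ℚ-irr(h) is the set of irrational discontinuity points of h. -/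
/-- `sup s((-∞,γ)∩ℚ)` in the extended reals. -/
noncomputable def eSupBelow (s : ℚ → ℚ) (γ : ℝ) : EReal :=
  sSup ((fun p : ℚ => ((s p : ℝ) : EReal)) '' {p : ℚ | (p : ℝ) < γ})

/-- `inf s((γ,+∞)∩ℚ)` in the extended reals. -/
noncomputable def eInfAbove (s : ℚ → ℚ) (γ : ℝ) : EReal :=
  sInf ((fun p : ℚ => ((s p : ℝ) : EReal)) '' {p : ℚ | γ < (p : ℝ)})

/-- The set of irrational discontinuity points of `s`. -/
noncomputable def DcIrr (s : ℚ → ℚ) : Set ℝ :=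
  {γ : ℝ | Irrational γ ∧ eSupBelow s γ < eInfAbove s γ}

lemma myCofinalSup (h : ℚ → ℚ) (hh : Monotone h) (S T : Set ℚ)
    (hST : S ⊆ T) (hcof : ∀ t ∈ T, ∃ s ∈ S, t ≤ s) :
    sSup ((fun m : ℚ => ((h m : ℝ) : EReal)) '' S)
      = sSup ((fun m : ℚ => ((h m : ℝ) : EReal)) '' T) := by
  apply le_antisymm (sSup_le_sSup (Set.image_mono hST))
  apply sSup_le
  rintro x ⟨t, ht, rfl⟩
  obtain ⟨s, hs, hts⟩ := hcof t ht
  calc ((h t : ℝ) : EReal) ≤ ((h s : ℝ) : EReal) := by exact_mod_cast hh hts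
  _ ≤ _ := le_sSup (show ((h s : ℝ) : EReal) ∈ (fun m : ℚ => ((h m : ℝ) : EReal)) '' S from ⟨s, hs, rfl⟩)

lemma myCoinitialInf (h : ℚ → ℚ) (hh : Monotone h) (S T : Set ℚ)
    (hST : S ⊆ T) (hcof : ∀ t ∈ T, ∃ s ∈ S, s ≤ t) :
    sInf ((fun m : ℚ => ((h m : ℝ) : EReal)) '' S)
      = sInf ((fun m : ℚ => ((h m : ℝ) : EReal)) '' T) := by
  apply le_antisymm _ (sInf_le_sInf (Set.image_mono hST))
  apply le_sInf
  rintro x ⟨t, ht, rfl⟩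
  obtain ⟨s, hs, hts⟩ := hcof t ht
  calc sInf ((fun m : ℚ => ((h m : ℝ) : EReal)) '' S) ≤ ((h s : ℝ) : EReal) :=
    sInf_le (show ((h s : ℝ) : EReal) ∈ (fun m : ℚ => ((h m : ℝ) : EReal)) '' S from ⟨s, hs, rfl⟩)
  _ ≤ ((h t : ℝ) : EReal) := by exact_mod_cast hh hts

lemma mySupBelowId (β : ℝ) :
    sSup ((fun m : ℚ => ((m : ℝ) : EReal)) '' {m : ℚ | (m : ℝ) < β}) = (β : EReal) := by
  apply le_antisymm
  · apply sSup_le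
    rintro x ⟨m, hm, rfl⟩
    have hm' : (m : ℝ) < β := hm
    show ((m : ℝ) : EReal) ≤ (β : EReal)
    exact_mod_cast le_of_lt hm'
  · by_contra hlt
    push_neg at hlt
    obtain ⟨q, h1, h2⟩ := EReal.exists_rat_btwn_of_lt hlt
    have hq : (q : ℝ) < β := by exact_mod_cast h2
    exact absurd (le_sSup (show ((q : ℝ) : EReal) ∈
      (fun m : ℚ => ((m : ℝ) : EReal)) '' {m : ℚ | (m : ℝ) < β} from ⟨q, hq, rfl⟩)) (not_le.2 h1)

lemma myInfAboveId (β : ℝ) :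
    sInf ((fun m : ℚ => ((m : ℝ) : EReal)) '' {m : ℚ | β < (m : ℝ)}) = (β : EReal) := by
  apply le_antisymm
  · by_contra hlt
    push_neg at hlt
    obtain ⟨q, h1, h2⟩ := EReal.exists_rat_btwn_of_lt hlt
    have hq : β < (q : ℝ) := by exact_mod_cast h1
    exact absurd (sInf_le (show ((q : ℝ) : EReal) ∈
      (fun m : ℚ => ((m : ℝ) : EReal)) '' {m : ℚ | β < (m : ℝ)} from ⟨q, hq, rfl⟩)) (not_le.2 h2)
  · apply le_sInf
    rintro x ⟨m, hm, rfl⟩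
    have hm' : β < (m : ℝ) := hm
    show (β : EReal) ≤ ((m : ℝ) : EReal)
    exact_mod_cast le_of_lt hm'

/-- Let `g` be a generic injection and `b` an order automorphism of `ℚ` with
canonical monotone extensions `gbar`, `bbar` to `ℝ`.  Then `b ∘ g` is continuous
at every irrational point; and for any strictly monotone `h : ℚ → ℚ`, the set of
irrational discontinuity points of `h ∘ b ∘ g` equals
`gbar⁻¹( bbar⁻¹(DcIrr h) ∩ Img(gbar) ) ∩ (ℝ ∖ ℚ)`. -/
theorem discontinuities_of_composition (g b h : ℚ → ℚ) (gbar bbar : ℝ → ℝ)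
    (hg_sm : StrictMono g)
    (hg_ub : ∀ q : ℚ, ∃ x : ℚ, g x < q) (hg_ua : ∀ q : ℚ, ∃ x : ℚ, q < g x)
    (hg_cont : ∀ γ : ℝ, Irrational γ → eSupBelow g γ = eInfAbove g γ)
    (hg_LP : ∀ γ : ℝ, γ ∈ closure ((Set.range fun q : ℚ => (g q : ℝ)) \ {γ}) →
      Irrational γ)
    (hb_bij : Function.Bijective b) (hb_ord : ∀ x y : ℚ, x ≤ y ↔ b x ≤ b y)
    (hgbar_q : ∀ q : ℚ, gbar q = g q)
    (hgbar_irr : ∀ γ : ℝ, Irrational γ →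
      gbar γ = sSup {x : ℝ | ∃ p : ℚ, (p : ℝ) < γ ∧ x = g p})
    (hbbar_q : ∀ q : ℚ, bbar q = b q)
    (hbbar_irr : ∀ γ : ℝ, Irrational γ →
      bbar γ = sSup {x : ℝ | ∃ p : ℚ, (p : ℝ) < γ ∧ x = b p})
    (hh : StrictMono h) :
    (∀ γ : ℝ, Irrational γ → eSupBelow (b ∘ g) γ = eInfAbove (b ∘ g) γ) ∧
    DcIrr (h ∘ b ∘ g) =
      gbar ⁻¹' (bbar ⁻¹' DcIrr h ∩ Set.range gbar) ∩ {γ : ℝ | Irrational γ} := by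
  have hb_mono : Monotone b := fun x y hxy => (hb_ord x y).1 hxy
  have hb_smono : StrictMono b := hb_mono.strictMono_of_injective hb_bij.1
  -- the key packaged lemma
  have key : ∀ γ : ℝ, Irrational γ → ∃ β : ℝ, Irrational β ∧ bbar (gbar γ) = β ∧
      (∀ s : ℚ → ℚ, Monotone s →
        eSupBelow (fun p => s (b (g p))) γ
            = sSup ((fun m : ℚ => ((s m : ℝ) : EReal)) '' {m : ℚ | (m : ℝ) < β}) ∧
        eInfAbove (fun p => s (b (g p))) γ
            = sInf ((fun m : ℚ => ((s m : ℝ) : EReal)) '' {m : ℚ | β < (m : ℝ)})) := by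
    intro γ hγ
    have hAI : sSup ((fun p : ℚ => ((g p : ℝ) : EReal)) '' {p : ℚ | (p : ℝ) < γ})
        = sInf ((fun p : ℚ => ((g p : ℝ) : EReal)) '' {p : ℚ | γ < (p : ℝ)}) :=
      hg_cont γ hγ
    set A := sSup ((fun p : ℚ => ((g p : ℝ) : EReal)) '' {p : ℚ | (p : ℝ) < γ}) with hAdef
    obtain ⟨p0, hp0⟩ := exists_rat_lt γ
    obtain ⟨p1, hp1⟩ := exists_rat_gt γ
    have hAlb : ((g p0 : ℝ) : EReal) ≤ A := le_sSup ⟨p0, hp0, rfl⟩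
    have hAub : A ≤ ((g p1 : ℝ) : EReal) := hAI ▸ sInf_le ⟨p1, hp1, rfl⟩
    have hbotA : (⊥ : EReal) < A := lt_of_lt_of_le (EReal.bot_lt_coe _) hAlb
    have htopA : A < ⊤ := lt_of_le_of_lt hAub (EReal.coe_lt_top _)
    set α := A.toReal with hαdef
    have hαA : A = (α : EReal) := (EReal.coe_toReal htopA.ne hbotA.ne').symm
    -- strict bounds for g around γ
    have hlt_below : ∀ p : ℚ, (p : ℝ) < γ → ((g p : ℝ) : EReal) < (α : EReal) := by
      intro p hp
      obtain ⟨p', hp'1, hp'2⟩ := exists_rat_btwn hp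
      have : ((g p : ℝ) : EReal) < ((g p' : ℝ) : EReal) := by
        exact_mod_cast hg_sm (by exact_mod_cast hp'1)
      exact hαA ▸ lt_of_lt_of_le this (le_sSup ⟨p', hp'2, rfl⟩)
    have hlt_above : ∀ p : ℚ, γ < (p : ℝ) → (α : EReal) < ((g p : ℝ) : EReal) := by
      intro p hp
      obtain ⟨p', hp'1, hp'2⟩ := exists_rat_btwn hp
      have : ((g p' : ℝ) : EReal) < ((g p : ℝ) : EReal) := by
        exact_mod_cast hg_sm (by exact_mod_cast hp'2)
      refine lt_of_le_of_lt ?_ this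
      rw [← hαA, hAI]
      exact sInf_le ⟨p', hp'1, rfl⟩
    have hcof_below : ∀ q : ℚ, ((q : ℝ) : EReal) < (α : EReal) →
        ∃ p : ℚ, (p : ℝ) < γ ∧ q < g p := by
      intro q hq
      rw [← hαA] at hq
      obtain ⟨x, ⟨p, hp, rfl⟩, hx⟩ := lt_sSup_iff.1 hq
      have hx' : ((q : ℝ) : EReal) < ((g p : ℝ) : EReal) := hx
      exact ⟨p, hp, by exact_mod_cast hx'⟩
    have hcof_above : ∀ q : ℚ, (α : EReal) < ((q : ℝ) : EReal) →
        ∃ p : ℚ, γ < (p : ℝ) ∧ g p < q := by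
      intro q hq
      rw [← hαA, hAI] at hq
      obtain ⟨x, ⟨p, hp, rfl⟩, hx⟩ := sInf_lt_iff.1 hq
      have hx' : ((g p : ℝ) : EReal) < ((q : ℝ) : EReal) := hx
      exact ⟨p, hp, by exact_mod_cast hx'⟩
    -- α is irrational
    have hαirr : Irrational α := by
      apply hg_LP
      rw [Metric.mem_closure_iff]
      intro ε hε
      obtain ⟨q, hq1, hq2⟩ := exists_rat_btwn (sub_lt_self α hε)
      obtain ⟨p, hp, hqp⟩ := hcof_below q (by exact_mod_cast hq2)
      have hgpα : (g p : ℝ) < α := by exact_mod_cast hlt_below p hp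
      refine ⟨(g p : ℝ), ⟨⟨p, rfl⟩, ?_⟩, ?_⟩
      · simp only [Set.mem_singleton_iff]
        exact ne_of_lt hgpα
      · rw [Real.dist_eq, abs_of_pos (by linarith)]
        have : (q : ℝ) < (g p : ℝ) := by exact_mod_cast hqp
        linarith
    -- α = gbar γ
    have hgbarγ : gbar γ = α := by
      rw [hgbar_irr γ hγ]
      have hne : Set.Nonempty {x : ℝ | ∃ p : ℚ, (p : ℝ) < γ ∧ x = g p} := ⟨(g p0 : ℝ), p0, hp0, rfl⟩
      refine IsLUB.csSup_eq ?_ hne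
      constructor
      · rintro x ⟨p, hp, rfl⟩
        exact_mod_cast le_of_lt (hlt_below p hp)
      · intro u hu
        by_contra hlt
        push_neg at hlt
        obtain ⟨q, hq1, hq2⟩ := exists_rat_btwn hlt
        obtain ⟨p, hp, hqp⟩ := hcof_below q (by exact_mod_cast hq2)
        have : (g p : ℝ) ≤ u := hu ⟨p, hp, rfl⟩
        have : (q : ℝ) < (g p : ℝ) := by exact_mod_cast hqp
        linarith
    -- the b side at α
    set Bs := sSup ((fun m : ℚ => ((b m : ℝ) : EReal)) '' {m : ℚ | (m : ℝ) < α}) with hBdef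
    set Is := sInf ((fun m : ℚ => ((b m : ℝ) : EReal)) '' {m : ℚ | α < (m : ℝ)}) with hIdef
    obtain ⟨q0, hq0⟩ := exists_rat_lt α
    obtain ⟨q1, hq1⟩ := exists_rat_gt α
    have hBlb : ((b q0 : ℝ) : EReal) ≤ Bs := le_sSup ⟨q0, hq0, rfl⟩
    have hBub : Bs ≤ ((b q1 : ℝ) : EReal) := by
      apply sSup_le
      rintro x ⟨m, hm, rfl⟩
      have hmq : m ≤ q1 := by
        have : (m : ℝ) < (q1 : ℝ) := lt_trans (show (m:ℝ) < α from hm) hq1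
        exact_mod_cast le_of_lt this
      show ((b m : ℝ) : EReal) ≤ ((b q1 : ℝ) : EReal)
      exact_mod_cast hb_mono hmq
    have hIlb : ((b q0 : ℝ) : EReal) ≤ Is := by
      apply le_sInf
      rintro x ⟨m, hm, rfl⟩
      have hmq : q0 ≤ m := by
        have : (q0 : ℝ) < (m : ℝ) := lt_trans hq0 (show α < (m:ℝ) from hm)
        exact_mod_cast le_of_lt this
      show ((b q0 : ℝ) : EReal) ≤ ((b m : ℝ) : EReal)
      exact_mod_cast hb_mono hmq
    have hBI : Bs = Is := by
      apply le_antisymm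
      · apply sSup_le
        rintro x ⟨m, hm, rfl⟩
        apply le_sInf
        rintro y ⟨m', hm', rfl⟩
        have hmm : m ≤ m' := by
          have : (m : ℝ) < (m' : ℝ) := lt_trans (show (m:ℝ) < α from hm) (show α < (m':ℝ) from hm')
          exact_mod_cast le_of_lt this
        show ((b m : ℝ) : EReal) ≤ ((b m' : ℝ) : EReal)
        exact_mod_cast hb_mono hmm
      · by_contra hlt
        push_neg at hlt
        obtain ⟨m, hm1, hm2⟩ := EReal.exists_rat_btwn_of_lt hlt
        obtain ⟨r, rfl⟩ := hb_bij.2 m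
        rcases lt_trichotomy (r : ℝ) α with hr | hr | hr
        · exact absurd (le_sSup (show ((b r : ℝ) : EReal) ∈
            (fun m : ℚ => ((b m : ℝ) : EReal)) '' {m : ℚ | (m : ℝ) < α} from ⟨r, hr, rfl⟩))
            (not_le.2 hm1)
        · exact hαirr ⟨r, hr⟩
        · exact absurd (sInf_le (show ((b r : ℝ) : EReal) ∈
            (fun m : ℚ => ((b m : ℝ) : EReal)) '' {m : ℚ | α < (m : ℝ)} from ⟨r, hr, rfl⟩))
            (not_le.2 hm2)
    have hbotB : (⊥ : EReal) < Bs := lt_of_lt_of_le (EReal.bot_lt_coe _) hBlb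
    have htopB : Bs < ⊤ := lt_of_le_of_lt hBub (EReal.coe_lt_top _)
    set β := Bs.toReal with hβdef
    have hβB : Bs = (β : EReal) := (EReal.coe_toReal htopB.ne hbotB.ne').symm
    have hβI : Is = (β : EReal) := hBI ▸ hβB
    -- strict bounds for b around α
    have hblt_below : ∀ m : ℚ, (m : ℝ) < α → ((b m : ℝ) : EReal) < (β : EReal) := by
      intro m hm
      obtain ⟨m', hm'1, hm'2⟩ := exists_rat_btwn hm
      have : ((b m : ℝ) : EReal) < ((b m' : ℝ) : EReal) := by
        exact_mod_cast hb_smono (by exact_mod_cast hm'1)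
      exact hβB ▸ lt_of_lt_of_le this (le_sSup ⟨m', hm'2, rfl⟩)
    have hblt_above : ∀ m : ℚ, α < (m : ℝ) → (β : EReal) < ((b m : ℝ) : EReal) := by
      intro m hm
      obtain ⟨m', hm'1, hm'2⟩ := exists_rat_btwn hm
      have : ((b m' : ℝ) : EReal) < ((b m : ℝ) : EReal) := by
        exact_mod_cast hb_smono (by exact_mod_cast hm'2)
      refine lt_of_le_of_lt ?_ this
      rw [← hβI]
      exact sInf_le ⟨m', hm'1, rfl⟩
    have hbcof_below : ∀ q : ℚ, ((q : ℝ) : EReal) < (β : EReal) →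
        ∃ m : ℚ, (m : ℝ) < α ∧ q < b m := by
      intro q hq
      rw [← hβB] at hq
      obtain ⟨x, ⟨m, hm, rfl⟩, hx⟩ := lt_sSup_iff.1 hq
      have hx' : ((q : ℝ) : EReal) < ((b m : ℝ) : EReal) := hx
      exact ⟨m, hm, by exact_mod_cast hx'⟩
    have hbcof_above : ∀ q : ℚ, (β : EReal) < ((q : ℝ) : EReal) →
        ∃ m : ℚ, α < (m : ℝ) ∧ b m < q := by
      intro q hq
      rw [← hβI] at hq
      obtain ⟨x, ⟨m, hm, rfl⟩, hx⟩ := sInf_lt_iff.1 hq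
      have hx' : ((b m : ℝ) : EReal) < ((q : ℝ) : EReal) := hx
      exact ⟨m, hm, by exact_mod_cast hx'⟩
    -- β is irrational
    have hβirr : Irrational β := by
      rintro ⟨c, hc⟩
      obtain ⟨r, rfl⟩ := hb_bij.2 c
      rcases lt_trichotomy (r : ℝ) α with hr | hr | hr
      · have := hblt_below r hr
        rw [← hc] at this
        exact absurd this (lt_irrefl _)
      · exact hαirr ⟨r, hr⟩
      · have := hblt_above r hr
        rw [← hc] at this
        exact absurd this (lt_irrefl _)
    -- β = bbar α
    have hbbarα : bbar α = β := by
      rw [hbbar_irr α hαirr]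
      have hne : Set.Nonempty {x : ℝ | ∃ p : ℚ, (p : ℝ) < α ∧ x = b p} := ⟨(b q0 : ℝ), q0, hq0, rfl⟩
      refine IsLUB.csSup_eq ?_ hne
      constructor
      · rintro x ⟨m, hm, rfl⟩
        exact_mod_cast le_of_lt (hblt_below m hm)
      · intro u hu
        by_contra hlt
        push_neg at hlt
        obtain ⟨q, hq1', hq2'⟩ := exists_rat_btwn hlt
        obtain ⟨m, hm, hqm⟩ := hbcof_below q (by exact_mod_cast hq2')
        have h1 : (b m : ℝ) ≤ u := hu ⟨m, hm, rfl⟩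
        have h2 : (q : ℝ) < (b m : ℝ) := by exact_mod_cast hqm
        linarith
    refine ⟨β, hβirr, by rw [hgbarγ, hbbarα], ?_⟩
    intro s hs
    constructor
    · show sSup ((fun p : ℚ => ((s (b (g p)) : ℝ) : EReal)) '' {p : ℚ | (p : ℝ) < γ}) = _
      rw [show (fun p : ℚ => ((s (b (g p)) : ℝ) : EReal))
            = (fun m : ℚ => ((s m : ℝ) : EReal)) ∘ (fun p : ℚ => b (g p)) from rfl,
          Set.image_comp]
      apply myCofinalSup s hs
      · rintro _ ⟨p, hp, rfl⟩
        have h1 : (g p : ℝ) < α := by exact_mod_cast hlt_below p hp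
        have h2 := hblt_below (g p) h1
        show (((b (g p)) : ℝ) : ℝ) < β
        exact_mod_cast h2
      · intro t ht
        have ht' : ((t : ℝ) : EReal) < (β : EReal) := by exact_mod_cast ht
        obtain ⟨q, hq, htq⟩ := hbcof_below t ht'
        obtain ⟨p, hp, hqp⟩ := hcof_below q (by exact_mod_cast hq)
        exact ⟨b (g p), ⟨p, hp, rfl⟩, le_of_lt (lt_of_lt_of_le htq (hb_mono hqp.le))⟩
    · show sInf ((fun p : ℚ => ((s (b (g p)) : ℝ) : EReal)) '' {p : ℚ | γ < (p : ℝ)}) = _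
      rw [show (fun p : ℚ => ((s (b (g p)) : ℝ) : EReal))
            = (fun m : ℚ => ((s m : ℝ) : EReal)) ∘ (fun p : ℚ => b (g p)) from rfl,
          Set.image_comp]
      apply myCoinitialInf s hs
      · rintro _ ⟨p, hp, rfl⟩
        have h1 : α < (g p : ℝ) := by exact_mod_cast hlt_above p hp
        have h2 := hblt_above (g p) h1
        show β < (((b (g p)) : ℝ) : ℝ)
        exact_mod_cast h2
      · intro t ht
        have ht' : (β : EReal) < ((t : ℝ) : EReal) := by exact_mod_cast ht
        obtain ⟨q, hq, htq⟩ := hbcof_above t ht'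
        obtain ⟨p, hp, hqp⟩ := hcof_above q (by exact_mod_cast hq)
        exact ⟨b (g p), ⟨p, hp, rfl⟩, le_of_lt (lt_of_le_of_lt (hb_mono hqp.le) htq)⟩
  constructor
  · intro γ hγ
    obtain ⟨β, hβirr, hβval, htrans⟩ := key γ hγ
    obtain ⟨h1, h2⟩ := htrans id monotone_id
    show eSupBelow (fun p => id (b (g p))) γ = eInfAbove (fun p => id (b (g p))) γ
    rw [h1, h2]
    exact (mySupBelowId β).trans (myInfAboveId β).symm
  · ext γ
    simp only [DcIrr, Set.mem_setOf_eq, Set.mem_inter_iff, Set.mem_preimage]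
    constructor
    · rintro ⟨hγirr, hlt⟩
      obtain ⟨β, hβirr, hβval, htrans⟩ := key γ hγirr
      obtain ⟨h1, h2⟩ := htrans h hh.monotone
      refine ⟨⟨?_, ⟨γ, rfl⟩⟩, hγirr⟩
      rw [hβval]
      refine ⟨hβirr, ?_⟩
      have e1 : eSupBelow (h ∘ b ∘ g) γ = eSupBelow (fun p => h (b (g p))) γ := rfl
      have e2 : eInfAbove (h ∘ b ∘ g) γ = eInfAbove (fun p => h (b (g p))) γ := rfl
      rw [e1, h1, e2, h2] at hlt
      exact hlt
    · rintro ⟨⟨hmem, -⟩, hγirr⟩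
      obtain ⟨β, hβirr, hβval, htrans⟩ := key γ hγirr
      obtain ⟨h1, h2⟩ := htrans h hh.monotone
      rw [hβval] at hmem
      refine ⟨hγirr, ?_⟩
      show eSupBelow (fun p => h (b (g p))) γ < eInfAbove (fun p => h (b (g p))) γ
      rw [h1, h2]
      exact hmem.2
end

section
/- Let f : ℚ → ℚ be monotone and surjective with the property that for every w ∈ ℚ the preimage f⁻¹({w}) has neither a greatest nor a least element. For monotone σ, ι : ℚ → ℚ, define P_q^B := f⁻¹({σ(q)}) for each q ∈ ℚ. Then for all q, y ∈ ℚ: (1) y ∈ P_q^B iff σ(q) = f(y); (2) there exists u < y with u ∈ P_q^B iff σ(q) ≤ f(y); (3) there exists u > y with u ∈ P_q^B iff σ(q) ≥ f(y). -/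
/-- For a monotone surjection `f : ℚ → ℚ` all of whose fibres have neither a
greatest nor a least element, and monotone `σ, ι : ℚ → ℚ`, with
`P_q^B := f⁻¹({σ q})`: (1) `y ∈ P_q^B` iff `σ q = f y`; (2) `∃ u < y` with
`u ∈ P_q^B` iff `σ q ≤ f y`; (3) `∃ u > y` with `u ∈ P_q^B` iff `σ q ≥ f y`. -/
theorem predicate_interpretation_in_B (f σ ι : ℚ → ℚ) (hf : Monotone f)
    (hfs : Function.Surjective f) (hσ : Monotone σ) (hι : Monotone ι)
    (hfib : ∀ w : ℚ, (∀ x : ℚ, f x = w → ∃ x' : ℚ, x' < x ∧ f x' = w) ∧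
      (∀ x : ℚ, f x = w → ∃ x' : ℚ, x < x' ∧ f x' = w)) :
    ∀ q y : ℚ,
      (y ∈ f ⁻¹' {σ q} ↔ σ q = f y) ∧
      ((∃ u : ℚ, u < y ∧ u ∈ f ⁻¹' {σ q}) ↔ σ q ≤ f y) ∧
      ((∃ u : ℚ, y < u ∧ u ∈ f ⁻¹' {σ q}) ↔ f y ≤ σ q) := by
  intro q y
  refine ⟨⟨fun h => h.symm, fun h => h.symm⟩, ⟨?_, ?_⟩, ⟨?_, ?_⟩⟩
  · rintro ⟨u, hu, hfu⟩
    simp only [Set.mem_preimage, Set.mem_singleton_iff] at hfu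
    exact hfu ▸ hf hu.le
  · intro h
    obtain ⟨x, hx⟩ := hfs (σ q)
    rcases lt_or_ge x y with hxy | hyx
    · exact ⟨x, hxy, hx⟩
    · have : f y = σ q := le_antisymm (hx ▸ hf hyx) h
      obtain ⟨x', hx', hfx'⟩ := (hfib (σ q)).1 y this
      exact ⟨x', hx', hfx'⟩
  · rintro ⟨u, hu, hfu⟩
    simp only [Set.mem_preimage, Set.mem_singleton_iff] at hfu
    exact hfu ▸ hf hu.le
  · intro h
    obtain ⟨x, hx⟩ := hfs (σ q)
    rcases lt_or_ge y x with hxy | hyx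
    · exact ⟨x, hxy, hx⟩
    · have : f y = σ q := le_antisymm h (hx ▸ hf hyx)
      obtain ⟨x', hx', hfx'⟩ := (hfib (σ q)).2 y this
      exact ⟨x', hx', hfx'⟩
end
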